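/- arXiv:2111.01745 — 4 statements merged into one kernel-verified Lean document; each statement's English description precedes it below -/
import Mathlib

section
/- Fix a prime p, an integer R₀, I ∈ ℚ_p, r ∈ ℤ, j ∈ {1,…,p−1}, and a representative n of ℚ_p/ℤ_p. Then for all x ∈ ℚ_p: (i) if r ≤ −R₀ and p^{−r}n−I ∈ p^{R₀}ℤ_p, then Ω(p^{R₀}|x−I|_p)·Ψ_{rnj}(x) = Ψ_{rnj}(x); (ii) if r ≤ −R₀ and p^{−r}n−I ∉ p^{R₀}ℤ_p, then Ω(p^{R₀}|x−I|_p)·Ψ_{rnj}(x) = 0; (iii) if r ≥ −R₀+1 and p^{−r}n−I ∈ p^{−r}ℤ_p, then Ω(p^{R₀}|x−I|_p)·Ψ_{rnj}(x) = c·p^{−r/2}·Ω(p^{R₀}|x−I|_p), where c = χ_p(p^{−1}j(p^r I−n)) is a p-th root of unity; (iv) if r ≥ −R₀+1 and p^{−r}n−I ∉ p^{−r}ℤ_p, then Ω(p^{R₀}|x−I|_p)·Ψ_{rnj}(x) = 0. -/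
open MeasureTheory Filter
open scoped Real Topology ENNReal NNReal

namespace PadicES

variable (p : ℕ) [Fact p.Prime]

noncomputable instance : MeasurableSpace ℚ_[p] := borel _
instance : BorelSpace ℚ_[p] := ⟨rfl⟩
noncomputable instance : DecidableEq ℚ_[p] := Classical.decEq _

/-- The closed unit ball `ℤ_p` viewed as a subset of `ℚ_p`. -/
def unitBall : Set ℚ_[p] := {x : ℚ_[p] | ‖x‖ ≤ 1}

lemma isCompact_unitBall : IsCompact (unitBall p) := by
  have : unitBall p = Metric.closedBall (0 : ℚ_[p]) 1 := by
    ext x; simp [unitBall, Metric.mem_closedBall, dist_eq_norm]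
  rw [this]; exact isCompact_closedBall _ _

lemma interior_unitBall_nonempty : (interior (unitBall p)).Nonempty := by
  have : unitBall p = Metric.closedBall (0 : ℚ_[p]) 1 := by
    ext x; simp [unitBall, Metric.mem_closedBall, dist_eq_norm]
  rw [this, (IsUltrametricDist.isOpen_closedBall (0 : ℚ_[p]) one_ne_zero).interior_eq]
  exact ⟨0, by simp⟩

/-- The Haar measure `dx` on `(ℚ_p, +)`, normalized so that `ℤ_p` has measure `1`. -/
noncomputable def haar : Measure ℚ_[p] :=
  Measure.addHaarMeasure ⟨⟨unitBall p, isCompact_unitBall p⟩, interior_unitBall_nonempty p⟩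

lemma norm_scaled_le_one (y : ℚ_[p]) (h : ¬ ‖y‖ ≤ 1) :
    ‖(p : ℚ_[p]) ^ ((-y.valuation).toNat) * y‖ ≤ 1 := by
  have hy : y ≠ 0 := by rintro rfl; simp at h
  have hv : y.valuation < 0 := by
    by_contra hv
    push_neg at hv
    exact h ((Padic.norm_le_one_iff_val_nonneg (p := p) y).mpr hv)
  have hp0 : (0 : ℝ) < (p : ℝ) := by
    exact_mod_cast (Fact.out : p.Prime).pos
  rw [norm_mul, norm_pow, Padic.norm_p, Padic.norm_eq_zpow_neg_valuation hy]
  rw [inv_pow, ← zpow_natCast, Int.toNat_of_nonneg (by omega)]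
  rw [← zpow_neg, ← zpow_add₀ (ne_of_gt hp0)]
  simp

/-- The `p`-adic fractional part `{y}_p`, as a rational number. -/
noncomputable def fract (y : ℚ_[p]) : ℚ :=
  if h : ‖y‖ ≤ 1 then 0
  else
    ((PadicInt.toZModPow ((-y.valuation).toNat)
        (⟨(p : ℚ_[p]) ^ ((-y.valuation).toNat) * y, norm_scaled_le_one p y h⟩ :
          ℤ_[p])).val : ℚ) / (p : ℚ) ^ ((-y.valuation).toNat)

/-- The standard additive character `χ_p(y) = exp(2 π i {y}_p)` of `(ℚ_p,+)`. -/
noncomputable def stdChar (y : ℚ_[p]) : ℂ :=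
  Complex.exp (2 * (Real.pi : ℂ) * Complex.I * (fract p y : ℂ))

/-- The ball `a + p^R ℤ_p` of radius `p^{-R}` centered at `a`. -/
def ballSet (R : ℤ) (a : ℚ_[p]) : Set ℚ_[p] := {x : ℚ_[p] | ‖x - a‖ ≤ (p : ℝ) ^ (-R)}

/-- `Ω(p^R |x - a|_p)`: the indicator function of the ball `a + p^R ℤ_p` (complex valued). -/
noncomputable def ballInd (R : ℤ) (a x : ℚ_[p]) : ℂ := if ‖x - a‖ ≤ (p : ℝ) ^ (-R) then 1 else 0

/-- `Ω(p^R |x - a|_p)`: the indicator function of the ball `a + p^R ℤ_p` (real valued). -/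
noncomputable def ballIndR (R : ℤ) (a x : ℚ_[p]) : ℝ := if ‖x - a‖ ≤ (p : ℝ) ^ (-R) then 1 else 0

/-- The Kozyrev wavelet
`Ψ_{rnj}(x) = p^{-r/2} χ_p(p^{-1} j (p^r x - n)) Ω(|p^r x - n|_p)`. -/
noncomputable def wavelet (r : ℤ) (n : ℚ_[p]) (j : ℕ) (x : ℚ_[p]) : ℂ :=
  (((p : ℝ) ^ (-(r : ℝ) / 2) : ℝ) : ℂ) *
    stdChar p ((p : ℚ_[p])⁻¹ * (j : ℚ_[p]) * ((p : ℚ_[p]) ^ r * x - n)) *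
    ballInd p 0 0 ((p : ℚ_[p]) ^ r * x - n)

/-- The Fourier transform `ĝ(ξ) = ∫ χ_p(ξ x) g(x) dx` of a complex-valued function. -/
noncomputable def fourierT (g : ℚ_[p] → ℂ) (ξ : ℚ_[p]) : ℂ :=
  ∫ x, stdChar p (ξ * x) * g x ∂(haar p)

/-- A function on `ℚ_p` is radial if it only depends on `|x|_p`. -/
def IsRadial (g : ℚ_[p] → ℝ) : Prop := ∀ x y : ℚ_[p], ‖x‖ = ‖y‖ → g x = g y

/-- Convolution `(g ∗ φ)(x) = ∫ g(x - y) φ(y) dy` of a real kernel with a complex function. -/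
noncomputable def conv (g : ℚ_[p] → ℝ) (φ : ℚ_[p] → ℂ) (x : ℚ_[p]) : ℂ :=
  ∫ y, (g (x - y) : ℂ) * φ y ∂(haar p)

/-- Real-valued convolution. -/
noncomputable def convR (g φ : ℚ_[p] → ℝ) (x : ℚ_[p]) : ℝ :=
  ∫ y, g (x - y) * φ y ∂(haar p)

/-- The fitness function `f(x) = Σ_{I ∈ G_M} f(I) Ω(p^M |x - I|_p)`. -/
noncomputable def fitness (fc : ℚ_[p] → ℝ) (M : ℕ) (G : Finset ℚ_[p]) (x : ℚ_[p]) : ℝ :=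
  ∑ I ∈ G, fc I * ballIndR p M I x

/-- The matrix `W⁰` of the operator `W₀ φ = Q₀ ∗ (f φ)` on the span of the
indicator functions of the balls `I + p^M ℤ_p`, `I ∈ G_M`. -/
noncomputable def Wmat (Q₀ fc : ℚ_[p] → ℝ) (M : ℕ) (G : Finset ℚ_[p]) :
    Matrix {I : ℚ_[p] // I ∈ G} {I : ℚ_[p] // I ∈ G} ℝ :=
  fun I J =>
    if I = J then fc I.1 * ∫ z in ballSet p M 0, Q₀ z ∂(haar p)
    else fc I.1 * Q₀ (J.1 - I.1) * (p : ℝ) ^ (-(M : ℤ))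


/-- The operator `W₀ φ = Q₀ ∗ (f φ)` (complex-valued version). -/
noncomputable def Wop (Q₀ fc : ℚ_[p] → ℝ) (M : ℕ) (G : Finset ℚ_[p]) (φ : ℚ_[p] → ℂ)
    (x : ℚ_[p]) : ℂ :=
  conv p Q₀ (fun y => ((fitness p fc M G y : ℝ) : ℂ) * φ y) x

/-- The operator `W₀ φ = Q₀ ∗ (f φ)` (real-valued version). -/
noncomputable def WopR (Q₀ fc : ℚ_[p] → ℝ) (M : ℕ) (G : Finset ℚ_[p]) (φ : ℚ_[p] → ℝ)
    (x : ℚ_[p]) : ℝ :=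
  convR p Q₀ (fun y => fitness p fc M G y * φ y) x

/-- The `p`-adic heat kernel `Z(ξ; σ, α) = ∫ χ_p(ξ x) e^{-σ |x|_p^α} dx`. -/
noncomputable def heatK (σ α : ℝ) (ξ : ℚ_[p]) : ℂ :=
  ∫ x, stdChar p (ξ * x) * ((Real.exp (-σ * ‖x‖ ^ α) : ℝ) : ℂ) ∂(haar p)

lemma fract_spec (y : ℚ_[p]) : ∃ (m k : ℕ), fract p y = (m : ℚ) / (p : ℚ) ^ k ∧
    ‖y - ((fract p y : ℚ) : ℚ_[p])‖ ≤ 1 ∧ (p : ℝ) ^ (k : ℤ) ≤ max ‖y‖ 1 := by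
  have hp1 : (1 : ℝ) < (p : ℝ) := by exact_mod_cast (Fact.out : p.Prime).one_lt
  have hp0 : (0 : ℝ) < (p : ℝ) := lt_trans one_pos hp1
  by_cases h : ‖y‖ ≤ 1
  · refine ⟨0, 0, ?_, ?_, ?_⟩
    · simp [fract, h]
    · simp [fract, h, h]
    · simpa using le_max_right ‖y‖ 1
  · set k : ℕ := (-y.valuation).toNat with hk
    set z : ℤ_[p] := ⟨(p : ℚ_[p]) ^ k * y, norm_scaled_le_one p y h⟩ with hz
    set m : ℕ := (PadicInt.toZModPow k z).val with hm
    have hfr : fract p y = (m : ℚ) / (p : ℚ) ^ k := by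
      rw [fract, dif_neg h]
    have hy : y ≠ 0 := by rintro rfl; simp at h
    have hv : y.valuation < 0 := by
      by_contra hv
      push_neg at hv
      exact h ((Padic.norm_le_one_iff_val_nonneg (p := p) y).mpr hv)
    have hnormy : ‖y‖ = (p : ℝ) ^ (k : ℤ) := by
      rw [Padic.norm_eq_zpow_neg_valuation hy, hk]
      congr 1
      omega
    -- z - m ∈ span p^k
    have hker : z - (m : ℤ_[p]) ∈ Ideal.span {(p : ℤ_[p]) ^ k} := by
      rw [← PadicInt.ker_toZModPow, RingHom.mem_ker, map_sub, map_natCast, hm,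
        ZMod.natCast_zmod_val, sub_self]
    have hzn : ‖z - (m : ℤ_[p])‖ ≤ (p : ℝ) ^ (-(k : ℤ)) :=
      (PadicInt.norm_le_pow_iff_mem_span_pow _ _).mpr hker
    refine ⟨m, k, hfr, ?_, by rw [← hnormy]; exact le_max_left _ _⟩
    have key : y - ((fract p y : ℚ) : ℚ_[p]) = ((p : ℚ_[p]) ^ k)⁻¹ * ((z : ℚ_[p]) - (m : ℚ_[p])) := by
      have hpk : ((p : ℚ_[p]) ^ k) ≠ 0 := by
        apply pow_ne_zero
        exact_mod_cast (Fact.out : p.Prime).ne_zero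
      rw [hfr]
      have : ((z : ℚ_[p])) = (p : ℚ_[p]) ^ k * y := rfl
      rw [this]
      push_cast
      field_simp
    rw [key, norm_mul]
    have h1 : ‖((p : ℚ_[p]) ^ k)⁻¹‖ = (p : ℝ) ^ (k : ℤ) := by
      rw [norm_inv, Padic.norm_p_pow]
      simp
    have h2 : ‖(z : ℚ_[p]) - (m : ℚ_[p])‖ ≤ (p : ℝ) ^ (-(k : ℤ)) := by
      have : ((z - (m : ℤ_[p]) : ℤ_[p]) : ℚ_[p]) = (z : ℚ_[p]) - (m : ℚ_[p]) := by push_cast; ring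
      rw [← this]
      exact hzn
    calc ‖((p : ℚ_[p]) ^ k)⁻¹‖ * ‖(z : ℚ_[p]) - (m : ℚ_[p])‖
        ≤ (p : ℝ) ^ (k : ℤ) * (p : ℝ) ^ (-(k : ℤ)) := by
          rw [h1]; exact mul_le_mul_of_nonneg_left h2 (by positivity)
      _ = 1 := by rw [← zpow_add₀ (ne_of_gt hp0)]; simp

lemma rat_int_of (q : ℚ) (m : ℤ) (k : ℕ) (hq : q = (m : ℚ) / (p : ℚ) ^ k)
    (h : ‖((q : ℚ) : ℚ_[p])‖ ≤ 1) : ∃ z : ℤ, q = (z : ℚ) := by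
  have hp0 : ((p : ℚ)) ≠ 0 := by exact_mod_cast (Fact.out : p.Prime).ne_zero
  have hmq : ((m : ℚ_[p])) = (p : ℚ_[p]) ^ k * ((q : ℚ) : ℚ_[p]) := by
    have hpk : ((p : ℚ_[p]) ^ k) ≠ 0 := by
      apply pow_ne_zero
      exact_mod_cast (Fact.out : p.Prime).ne_zero
    rw [hq]; push_cast
    rw [mul_div_assoc']
    rw [eq_div_iff hpk]
    ring
  have hmn : ‖(m : ℚ_[p])‖ ≤ (p : ℝ) ^ (-(k : ℤ)) := by
    rw [hmq, norm_mul, Padic.norm_p_pow]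
    calc (p : ℝ) ^ (-(k : ℤ)) * ‖((q : ℚ) : ℚ_[p])‖ ≤ (p : ℝ) ^ (-(k : ℤ)) * 1 :=
          mul_le_mul_of_nonneg_left h (by positivity)
      _ = _ := mul_one _
  have hdvd : ((p : ℤ) ^ k) ∣ m := (Padic.norm_int_le_pow_iff_dvd m k).mp hmn
  obtain ⟨z, hz⟩ := hdvd
  refine ⟨z, ?_⟩
  rw [hq, hz]
  push_cast
  field_simp

lemma stdChar_eq_one (y : ℚ_[p]) (h : ‖y‖ ≤ 1) : stdChar p y = 1 := by
  rw [stdChar, fract, dif_pos h]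
  simp

lemma stdChar_add_norm_le (u v : ℚ_[p]) (hu : ‖u‖ ≤ 1) : stdChar p (u + v) = stdChar p v := by
  obtain ⟨m, k, hfr, hnm, -⟩ := fract_spec p (u + v)
  obtain ⟨m', k', hfr', hnm', -⟩ := fract_spec p v
  have hdiff : ∃ z : ℤ, fract p (u + v) - fract p v = (z : ℚ) := by
    apply rat_int_of p _ ((m : ℤ) * (p : ℤ) ^ k' - (m' : ℤ) * (p : ℤ) ^ k) (k + k')
    · rw [hfr, hfr']
      have hp0 : ((p : ℚ)) ≠ 0 := by exact_mod_cast (Fact.out : p.Prime).ne_zero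
      field_simp
      push_cast
      ring
    · have : ((↑(fract p (u + v) - fract p v) : ℚ_[p])) =
          (v - ((fract p v : ℚ) : ℚ_[p])) + (-(((u + v)) - ((fract p (u + v) : ℚ) : ℚ_[p])) + u) := by
        push_cast
        ring
      rw [this]
      refine le_trans (Padic.nonarchimedean _ _) (max_le hnm' ?_)
      refine le_trans (Padic.nonarchimedean _ _) (max_le ?_ hu)
      rw [norm_neg]
      simpa using hnm
  obtain ⟨z, hz⟩ := hdiff
  have : fract p (u + v) = fract p v + (z : ℚ) := by linarith [hz]
  rw [stdChar, stdChar, this]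
  push_cast
  rw [mul_add, Complex.exp_add]
  have : (2 : ℂ) * (Real.pi : ℂ) * Complex.I * (z : ℂ) = (z : ℂ) * (2 * (Real.pi : ℂ) * Complex.I) := by ring
  rw [this, Complex.exp_int_mul_two_pi_mul_I, mul_one]

lemma stdChar_pow_p (y : ℚ_[p]) (h : ‖y‖ ≤ (p : ℝ)) : (stdChar p y) ^ p = 1 := by
  have hp1 : (1 : ℝ) < (p : ℝ) := by exact_mod_cast (Fact.out : p.Prime).one_lt
  obtain ⟨m, k, hfr, -, hk⟩ := fract_spec p y
  have hk1 : k ≤ 1 := by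
    by_contra hk1
    push_neg at hk1
    have h2 : (p : ℝ) ^ (k : ℤ) ≤ (p : ℝ) := le_trans hk (max_le h (le_of_lt hp1))
    have : ((p : ℝ) ^ (1 : ℤ)) < (p : ℝ) ^ (k : ℤ) := by
      apply zpow_lt_zpow_right₀ hp1
      omega
    rw [zpow_one] at this
    rw [zpow_natCast] at this h2
    linarith
  have hint : ∃ z : ℤ, (p : ℚ) * fract p y = (z : ℚ) := by
    interval_cases k
    · exact ⟨p * m, by rw [hfr]; push_cast; ring⟩
    · refine ⟨m, ?_⟩
      rw [hfr]
      have hp0 : ((p : ℚ)) ≠ 0 := by exact_mod_cast (Fact.out : p.Prime).ne_zero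
      field_simp
      norm_cast
  obtain ⟨z, hz⟩ := hint
  rw [stdChar, ← Complex.exp_nat_mul]
  have : (p : ℂ) * (2 * (Real.pi : ℂ) * Complex.I * ((fract p y : ℚ) : ℂ)) =
      (z : ℂ) * (2 * (Real.pi : ℂ) * Complex.I) := by
    have : ((p : ℚ) * fract p y : ℚ) = (z : ℚ) := hz
    have hc : (p : ℂ) * ((fract p y : ℚ) : ℂ) = (z : ℂ) := by exact_mod_cast congrArg (Rat.cast : ℚ → ℂ) this
    rw [← hc]; ring
  rw [this, Complex.exp_int_mul_two_pi_mul_I]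

/-- The restriction table of a Kozyrev wavelet `Ψ_{rnj}` to a ball
`I + p^{R₀}ℤ_p`: it equals `Ψ_{rnj}` itself, `0`, or a root of unity multiple of
`p^{-r/2} Ω(p^{R₀}|x-I|_p)`, according to the position of `p^{-r}n` and the size of `r`. -/
theorem wavelet_restriction_table (p : ℕ) [Fact p.Prime] (R₀ : ℤ) (I : ℚ_[p])
    (r : ℤ) (n : ℚ_[p]) (j : ℕ) (hj1 : 1 ≤ j) (hj2 : j ≤ p - 1)
    (Rep : Set ℚ_[p]) (hRep : ∀ x : ℚ_[p], ∃! m : ℚ_[p], m ∈ Rep ∧ ‖x - m‖ ≤ 1)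
    (hn : n ∈ Rep) :
    -- (i)
    (r ≤ -R₀ → ‖(p : ℚ_[p]) ^ (-r) * n - I‖ ≤ (p : ℝ) ^ (-R₀) →
      ∀ x : ℚ_[p], ballInd p R₀ I x * wavelet p r n j x = wavelet p r n j x) ∧
    -- (ii)
    (r ≤ -R₀ → ¬ ‖(p : ℚ_[p]) ^ (-r) * n - I‖ ≤ (p : ℝ) ^ (-R₀) →
      ∀ x : ℚ_[p], ballInd p R₀ I x * wavelet p r n j x = 0) ∧
    -- (iii)
    (-R₀ + 1 ≤ r → ‖(p : ℚ_[p]) ^ (-r) * n - I‖ ≤ (p : ℝ) ^ r →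
      ((∀ x : ℚ_[p], ballInd p R₀ I x * wavelet p r n j x =
          stdChar p ((p : ℚ_[p])⁻¹ * (j : ℚ_[p]) * ((p : ℚ_[p]) ^ r * I - n)) *
            (((p : ℝ) ^ (-(r : ℝ) / 2) : ℝ) : ℂ) * ballInd p R₀ I x) ∧
        (stdChar p ((p : ℚ_[p])⁻¹ * (j : ℚ_[p]) * ((p : ℚ_[p]) ^ r * I - n))) ^ p = 1)) ∧
    -- (iv)
    (-R₀ + 1 ≤ r → ¬ ‖(p : ℚ_[p]) ^ (-r) * n - I‖ ≤ (p : ℝ) ^ r →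
      ∀ x : ℚ_[p], ballInd p R₀ I x * wavelet p r n j x = 0) := by
  have hp1 : (1 : ℝ) < (p : ℝ) := by exact_mod_cast (Fact.out : p.Prime).one_lt
  have hpQ : (p : ℚ_[p]) ≠ 0 := by exact_mod_cast (Fact.out : p.Prime).ne_zero
  set a : ℚ_[p] := (p : ℚ_[p]) ^ (-r) * n with ha
  have hfactor : ∀ x : ℚ_[p], (p : ℚ_[p]) ^ r * x - n = (p : ℚ_[p]) ^ r * (x - a) := by
    intro x
    rw [ha, mul_sub, ← mul_assoc, ← zpow_add₀ hpQ]
    simp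
  have hnorm : ∀ x : ℚ_[p], ‖(p : ℚ_[p]) ^ r * x - n‖ = (p : ℝ) ^ (-r) * ‖x - a‖ := by
    intro x
    rw [hfactor, norm_mul, Padic.norm_p_zpow]
  have hposr : (0 : ℝ) < (p : ℝ) ^ (-r) := by positivity
  have hiff : ∀ x : ℚ_[p], (‖(p : ℚ_[p]) ^ r * x - n‖ ≤ 1 ↔ ‖x - a‖ ≤ (p : ℝ) ^ r) := by
    intro x
    rw [hnorm, ← le_div_iff₀' hposr, one_div, ← zpow_neg, neg_neg]
  have hindw : ∀ x : ℚ_[p], ballInd p 0 0 ((p : ℚ_[p]) ^ r * x - n) =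
      if ‖x - a‖ ≤ (p : ℝ) ^ r then 1 else 0 := by
    intro x
    rw [ballInd]
    simp only [sub_zero, neg_zero, zpow_zero]
    by_cases h : ‖x - a‖ ≤ (p : ℝ) ^ r
    · rw [if_pos ((hiff x).mpr h), if_pos h]
    · rw [if_neg (fun hh => h ((hiff x).mp hh)), if_neg h]
  have hjnorm : ‖(j : ℚ_[p])‖ ≤ 1 := by
    have := Padic.norm_int_le_one (p := p) (j : ℤ)
    push_cast at this
    exact this
  have hpinv : ‖(p : ℚ_[p])⁻¹‖ = (p : ℝ) := by
    rw [norm_inv, Padic.norm_p, inv_inv]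
  refine ⟨?_, ?_, ?_, ?_⟩
  · -- (i)
    intro hr hc x
    by_cases hx : ‖x - a‖ ≤ (p : ℝ) ^ r
    · have hxa : ‖x - a‖ ≤ (p : ℝ) ^ (-R₀) :=
        le_trans hx (zpow_le_zpow_right₀ hp1.le (by omega))
      have hxI : ‖x - I‖ ≤ (p : ℝ) ^ (-R₀) := by
        have : x - I = (x - a) + (a - I) := by ring
        rw [this]
        exact le_trans (Padic.nonarchimedean _ _) (max_le hxa hc)
      rw [ballInd, if_pos hxI, one_mul]
    · have : wavelet p r n j x = 0 := by
        rw [wavelet, hindw, if_neg hx, mul_zero]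
      rw [this, mul_zero]
  · -- (ii)
    intro hr hc x
    push_neg at hc
    by_cases hx : ‖x - a‖ ≤ (p : ℝ) ^ r
    · have hxa : ‖x - a‖ ≤ (p : ℝ) ^ (-R₀) :=
        le_trans hx (zpow_le_zpow_right₀ hp1.le (by omega))
      have hne : ‖x - a‖ ≠ ‖a - I‖ := ne_of_lt (lt_of_le_of_lt hxa hc)
      have hxI : ‖x - I‖ = ‖a - I‖ := by
        have h1 : x - I = (x - a) + (a - I) := by ring
        rw [h1, Padic.add_eq_max_of_ne hne, max_eq_right (le_of_lt (lt_of_le_of_lt hxa hc))]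
      have : ¬ ‖x - I‖ ≤ (p : ℝ) ^ (-R₀) := by
        rw [hxI]; exact not_le_of_gt hc
      rw [ballInd, if_neg this, zero_mul]
    · have : wavelet p r n j x = 0 := by
        rw [wavelet, hindw, if_neg hx, mul_zero]
      rw [this, mul_zero]
  · -- (iii)
    intro hr hc
    have hIa : ‖I - a‖ ≤ (p : ℝ) ^ r := by rw [norm_sub_rev]; exact hc
    constructor
    · intro x
      by_cases hx : ‖x - I‖ ≤ (p : ℝ) ^ (-R₀)
      · have hxa : ‖x - a‖ ≤ (p : ℝ) ^ r := by
          have h1 : x - a = (x - I) + (I - a) := by ring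
          rw [h1]
          refine le_trans (Padic.nonarchimedean _ _) (max_le ?_ hIa)
          exact le_trans hx (zpow_le_zpow_right₀ hp1.le (by omega))
        have hchar : stdChar p ((p : ℚ_[p])⁻¹ * (j : ℚ_[p]) * ((p : ℚ_[p]) ^ r * x - n)) =
            stdChar p ((p : ℚ_[p])⁻¹ * (j : ℚ_[p]) * ((p : ℚ_[p]) ^ r * I - n)) := by
          have hsplit : (p : ℚ_[p])⁻¹ * (j : ℚ_[p]) * ((p : ℚ_[p]) ^ r * x - n) =
              ((p : ℚ_[p])⁻¹ * (j : ℚ_[p])) * ((p : ℚ_[p]) ^ r * (x - I)) +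
              (p : ℚ_[p])⁻¹ * (j : ℚ_[p]) * ((p : ℚ_[p]) ^ r * I - n) := by ring
          rw [hsplit]
          apply stdChar_add_norm_le
          rw [norm_mul, norm_mul, norm_mul, hpinv, Padic.norm_p_zpow]
          calc (p : ℝ) * ‖(j : ℚ_[p])‖ * ((p : ℝ) ^ (-r) * ‖x - I‖)
              ≤ (p : ℝ) * 1 * ((p : ℝ) ^ (-r) * (p : ℝ) ^ (-R₀)) := by
                apply mul_le_mul (by nlinarith [norm_nonneg (j : ℚ_[p])]) ?_ (by positivity) (by positivity)
                exact mul_le_mul_of_nonneg_left hx (le_of_lt hposr)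
            _ = (p : ℝ) ^ (1 - r - R₀) := by
                rw [mul_one, ← zpow_add₀ (by positivity : (p:ℝ) ≠ 0),
                  show (1:ℤ) - r - R₀ = 1 + (-r + -R₀) by ring,
                  zpow_one_add₀ (by positivity : (p:ℝ) ≠ 0)]
            _ ≤ (p : ℝ) ^ (0 : ℤ) := zpow_le_zpow_right₀ hp1.le (by omega)
            _ = 1 := zpow_zero _
        rw [wavelet, hindw, if_pos hxa, mul_one, ballInd, if_pos hx, one_mul, mul_one, hchar]
        ring
      · rw [ballInd, if_neg hx, zero_mul, mul_zero]
    · apply stdChar_pow_p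
      rw [norm_mul, norm_mul, hpinv]
      have h1 : ‖(p : ℚ_[p]) ^ r * I - n‖ ≤ 1 := (hiff I).mpr (by rw [norm_sub_rev] at hIa ⊢; exact hc)
      calc (p : ℝ) * ‖(j : ℚ_[p])‖ * ‖(p : ℚ_[p]) ^ r * I - n‖
          ≤ (p : ℝ) * 1 * 1 := by
            apply mul_le_mul ?_ h1 (norm_nonneg _) (by positivity)
            exact mul_le_mul_of_nonneg_left hjnorm (by positivity)
        _ = (p : ℝ) := by ring
  · -- (iv)
    intro hr hc x
    push_neg at hc
    by_cases hx : ‖x - I‖ ≤ (p : ℝ) ^ (-R₀)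
    · have hxI : ‖x - I‖ ≤ (p : ℝ) ^ r :=
        le_trans hx (zpow_le_zpow_right₀ hp1.le (by omega))
      have hIa : (p : ℝ) ^ r < ‖I - a‖ := by rw [norm_sub_rev]; exact hc
      have hne : ‖x - I‖ ≠ ‖I - a‖ := ne_of_lt (lt_of_le_of_lt hxI hIa)
      have hxa : ¬ ‖x - a‖ ≤ (p : ℝ) ^ r := by
        have h1 : x - a = (x - I) + (I - a) := by ring
        rw [h1, Padic.add_eq_max_of_ne hne,
          max_eq_right (le_of_lt (lt_of_le_of_lt hxI hIa))]
        exact not_le_of_gt hIa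
      have : wavelet p r n j x = 0 := by
        rw [wavelet, hindw, if_neg hxa, mul_zero]
      rw [this, mul_zero]
    · rw [ballInd, if_neg hx, zero_mul]
end PadicES
end

section
/- Let Q₀ be a nonnegative radial function supported in ℤ_p with Q₀ ∈ L¹(ℚ_p) and ∫_{ℤ_p}Q₀ = 1, and let W₀φ = Q₀ ∗ (fφ) with f(x) = Σ_{I∈G_M} f(I)·Ω(p^M|x−I|_p), f(I) > 0. Then for every I ∈ G_M, W₀Ω(p^M|x−I|_p) = f(I)·(∫_{p^Mℤ_p}Q₀(|z|_p)dz)·Ω(p^M|x−I|_p) + Σ_{J∈G_M, J≠I} f(I)·Q₀(|J−I|_p)·p^{−M}·Ω(p^M|x−J|_p). In particular the real span D_M of {Ω(p^M|x−I|_p)}_{I∈G_M} is invariant under W₀, and on D_M the operator W₀ is represented by the matrix W⁰ with W⁰_{II} = f(I)∫_{p^Mℤ_p}Q₀(|z|_p)dz and W⁰_{IJ} = f(I)Q₀(|J−I|_p)p^{−M} for I ≠ J. -/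
open MeasureTheory Filter
open scoped Real Topology ENNReal NNReal

namespace PadicES

variable (p : ℕ) [Fact p.Prime]

/-! ### Auxiliary lemmas -/

instance : (haar p).IsAddHaarMeasure := by unfold haar; infer_instance

instance : (haar p).Regular := by unfold haar; infer_instance

lemma aux_norm_sub_le_max (a b : ℚ_[p]) : ‖a - b‖ ≤ max ‖a‖ ‖b‖ := by
  simpa [sub_eq_add_neg] using Padic.nonarchimedean a (-b)

lemma aux_norm_eq_of_sub_lt {a b : ℚ_[p]} (h : ‖a - b‖ < ‖b‖) : ‖a‖ = ‖b‖ := by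
  have h1 : a = b + (a - b) := by ring
  rw [h1, Padic.add_eq_max_of_ne (ne_of_lt h).symm]
  exact max_eq_left h.le

lemma aux_measurableSet_ballSet (R : ℤ) (a : ℚ_[p]) : MeasurableSet (ballSet p R a) := by
  have : ballSet p R a = Metric.closedBall a ((p : ℝ) ^ (-R)) := by
    ext x; simp [ballSet, Metric.mem_closedBall, dist_eq_norm]
  rw [this]; exact measurableSet_closedBall

lemma aux_haar_unitBall : haar p (unitBall p) = 1 := Measure.addHaarMeasure_self

lemma aux_haar_ballSet_eq (R : ℤ) (a : ℚ_[p]) :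
    haar p (ballSet p R a) = haar p (ballSet p R 0) := by
  have h : ballSet p R a = (fun x => x + (-a)) ⁻¹' (ballSet p R 0) := by
    ext x; simp [ballSet, sub_eq_add_neg]
  rw [h, measure_preimage_add_right]

lemma aux_eps_le_one (M : ℕ) : (p : ℝ) ^ (-(M : ℤ)) ≤ 1 := by
  have hp : (1 : ℝ) ≤ (p : ℝ) := by exact_mod_cast (Fact.out : p.Prime).one_lt.le
  calc (p : ℝ) ^ (-(M : ℤ)) ≤ (p : ℝ) ^ (0 : ℤ) := zpow_le_zpow_right₀ hp (by omega)
    _ = 1 := zpow_zero _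

lemma aux_eps_pos (M : ℕ) : 0 < (p : ℝ) ^ (-(M : ℤ)) := by
  have hp : (0 : ℝ) < (p : ℝ) := by exact_mod_cast (Fact.out : p.Prime).pos
  exact zpow_pos hp _

lemma aux_mem_unitBall {M : ℕ} {a x : ℚ_[p]} (ha : ‖a‖ ≤ 1)
    (hx : ‖x - a‖ ≤ (p : ℝ) ^ (-(M : ℤ))) : ‖x‖ ≤ 1 := by
  have h1 : x = (x - a) + a := by ring
  calc ‖x‖ = ‖(x - a) + a‖ := by rw [← h1]
    _ ≤ max ‖x - a‖ ‖a‖ := Padic.nonarchimedean _ _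
    _ ≤ 1 := max_le (hx.trans (aux_eps_le_one p M)) ha

lemma aux_haar_ball (M : ℕ) : haar p (ballSet p (M : ℤ) 0) = ((p : ℝ≥0∞) ^ M)⁻¹ := by
  classical
  set v := haar p (ballSet p (M : ℤ) 0) with hv
  have hp1 : 1 < p := (Fact.out : p.Prime).one_lt
  have hcover : unitBall p = ⋃ k ∈ Finset.range (p ^ M), ballSet p (M : ℤ) ((k : ℕ) : ℚ_[p]) := by
    ext x
    constructor
    · intro hx
      have hx' : ‖x‖ ≤ 1 := hx
      set z : ℤ_[p] := ⟨x, hx'⟩ with hz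
      refine Set.mem_biUnion (Finset.mem_range.mpr (PadicInt.appr_lt z M)) ?_
      have h1 : z - ((z.appr M : ℕ) : ℤ_[p]) ∈ Ideal.span {(p : ℤ_[p]) ^ M} :=
        PadicInt.appr_spec M z
      have h2 : ‖z - ((z.appr M : ℕ) : ℤ_[p])‖ ≤ (p : ℝ) ^ (-(M : ℤ)) :=
        (PadicInt.norm_le_pow_iff_mem_span_pow _ M).mpr h1
      have h3 : ((z - ((z.appr M : ℕ) : ℤ_[p]) : ℤ_[p]) : ℚ_[p])
          = x - ((z.appr M : ℕ) : ℚ_[p]) := by push_cast [hz]; rfl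
      show ‖x - ((z.appr M : ℕ) : ℚ_[p])‖ ≤ (p : ℝ) ^ (-(M : ℤ))
      rw [← h3, ← PadicInt.norm_def]
      exact h2
    · intro hx
      obtain ⟨k, _, hk⟩ := Set.mem_iUnion₂.mp hx
      have hk1 : ‖((k : ℕ) : ℚ_[p])‖ ≤ 1 := by
        have := Padic.norm_int_le_one (p := p) (k : ℤ)
        simpa using this
      exact aux_mem_unitBall p hk1 hk
  have hdisj : (↑(Finset.range (p ^ M)) : Set ℕ).PairwiseDisjoint
      (fun k => ballSet p (M : ℤ) ((k : ℕ) : ℚ_[p])) := by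
    intro k hk l hl hne
    simp only [Finset.coe_range, Set.mem_Iio] at hk hl
    rw [Function.onFun, Set.disjoint_left]
    intro x hxk hxl
    have hxk' : ‖x - ((k : ℕ) : ℚ_[p])‖ ≤ (p : ℝ) ^ (-(M : ℤ)) := hxk
    have hxl' : ‖x - ((l : ℕ) : ℚ_[p])‖ ≤ (p : ℝ) ^ (-(M : ℤ)) := hxl
    have h1 : (((k : ℤ) - (l : ℤ) : ℤ) : ℚ_[p])
        = (x - ((l : ℕ) : ℚ_[p])) - (x - ((k : ℕ) : ℚ_[p])) := by push_cast; ring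
    have h2 : ‖(((k : ℤ) - (l : ℤ) : ℤ) : ℚ_[p])‖ ≤ (p : ℝ) ^ (-(M : ℤ)) := by
      rw [h1]
      exact (aux_norm_sub_le_max p _ _).trans (max_le hxl' hxk')
    have h3 : ((p : ℤ) ^ M) ∣ ((k : ℤ) - (l : ℤ)) :=
      (Padic.norm_int_le_pow_iff_dvd _ _).mp h2
    have h4 : ((k : ℤ) - (l : ℤ)) = 0 := by
      apply Int.eq_zero_of_abs_lt_dvd h3
      have hkb : (k : ℤ) < (p : ℤ) ^ M := by exact_mod_cast hk
      have hlb : (l : ℤ) < (p : ℤ) ^ M := by exact_mod_cast hl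
      rw [abs_lt]; omega
    exact hne (by omega)
  have hmeas : ∀ b ∈ Finset.range (p ^ M),
      MeasurableSet (ballSet p (M : ℤ) ((b : ℕ) : ℚ_[p])) :=
    fun b _ => aux_measurableSet_ballSet p _ _
  have hsum : ∑ k ∈ Finset.range (p ^ M), haar p (ballSet p (M : ℤ) ((k : ℕ) : ℚ_[p])) = 1 := by
    rw [← measure_biUnion_finset hdisj hmeas, ← hcover, aux_haar_unitBall]
  have hsum2 : ((p : ℝ≥0∞) ^ M) * v = 1 := by
    have : ∑ k ∈ Finset.range (p ^ M), haar p (ballSet p (M : ℤ) ((k : ℕ) : ℚ_[p]))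
        = ∑ _k ∈ Finset.range (p ^ M), v :=
      Finset.sum_congr rfl (fun k _ => aux_haar_ballSet_eq p _ _)
    rw [this, Finset.sum_const, Finset.card_range, nsmul_eq_mul] at hsum
    rw [← hsum]
    norm_cast
  have hne0 : ((p : ℝ≥0∞) ^ M) ≠ 0 := by
    positivity
  have hnetop : ((p : ℝ≥0∞) ^ M) ≠ ⊤ := by
    exact ENNReal.pow_ne_top (ENNReal.natCast_ne_top p)
  calc v = (((p : ℝ≥0∞) ^ M)⁻¹ * ((p : ℝ≥0∞) ^ M)) * v := by
        rw [ENNReal.inv_mul_cancel hne0 hnetop, one_mul]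
    _ = ((p : ℝ≥0∞) ^ M)⁻¹ * (((p : ℝ≥0∞) ^ M) * v) := by ring
    _ = ((p : ℝ≥0∞) ^ M)⁻¹ := by rw [hsum2, mul_one]

lemma aux_haar_ball_toReal (M : ℕ) (a : ℚ_[p]) :
    (haar p (ballSet p (M : ℤ) a)).toReal = (p : ℝ) ^ (-(M : ℤ)) := by
  rw [aux_haar_ballSet_eq, aux_haar_ball, ENNReal.toReal_inv]
  rw [zpow_neg, zpow_natCast, ENNReal.toReal_pow]
  simp

lemma aux_integral_ofReal (f : ℚ_[p] → ℝ) :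
    ∫ y, ((f y : ℝ) : ℂ) ∂(haar p) = ((∫ y, f y ∂(haar p) : ℝ) : ℂ) :=
  integral_ofReal

lemma aux_integral_mul_ballIndR (g : ℚ_[p] → ℝ) (R : ℤ) (a : ℚ_[p]) :
    ∫ y, g y * ballIndR p R a y ∂(haar p) = ∫ y in ballSet p R a, g y ∂(haar p) := by
  rw [← integral_indicator (aux_measurableSet_ballSet p R a)]
  congr 1
  ext y
  by_cases h : ‖y - a‖ ≤ (p : ℝ) ^ (-R)
  · have hy : y ∈ ballSet p R a := h
    rw [Set.indicator_of_mem hy, ballIndR, if_pos h, mul_one]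
  · have hy : y ∉ ballSet p R a := h
    rw [Set.indicator_of_notMem hy, ballIndR, if_neg h, mul_zero]

lemma aux_ball_unique {M : ℕ} {G : Finset ℚ_[p]}
    (hGsub : ∀ I ∈ G, ‖I‖ ≤ 1)
    (hG : ∀ x : ℚ_[p], ‖x‖ ≤ 1 → ∃! I : ℚ_[p], I ∈ G ∧ ‖x - I‖ ≤ (p : ℝ) ^ (-(M : ℤ)))
    {I J x : ℚ_[p]} (hI : I ∈ G) (hJ : J ∈ G)
    (hxI : ‖x - I‖ ≤ (p : ℝ) ^ (-(M : ℤ))) (hxJ : ‖x - J‖ ≤ (p : ℝ) ^ (-(M : ℤ))) : I = J := by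
  have hx1 : ‖x‖ ≤ 1 := aux_mem_unitBall p (hGsub I hI) hxI
  obtain ⟨K, _, hu⟩ := hG x hx1
  exact (hu I ⟨hI, hxI⟩).trans (hu J ⟨hJ, hxJ⟩).symm

lemma aux_fitness_mul {M : ℕ} {G : Finset ℚ_[p]} (fc : ℚ_[p] → ℝ)
    (hGsub : ∀ I ∈ G, ‖I‖ ≤ 1)
    (hG : ∀ x : ℚ_[p], ‖x‖ ≤ 1 → ∃! I : ℚ_[p], I ∈ G ∧ ‖x - I‖ ≤ (p : ℝ) ^ (-(M : ℤ)))
    {I : ℚ_[p]} (hI : I ∈ G) (y : ℚ_[p]) :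
    fitness p fc M G y * ballIndR p M I y = fc I * ballIndR p M I y := by
  by_cases hy : ‖y - I‖ ≤ (p : ℝ) ^ (-(M : ℤ))
  · have h1 : ballIndR p M I y = 1 := if_pos hy
    rw [h1, mul_one, mul_one, fitness]
    rw [Finset.sum_eq_single_of_mem I hI]
    · rw [h1, mul_one]
    · intro J hJ hne
      have h0 : ballIndR p M J y = 0 := by
        rw [ballIndR, if_neg]
        intro hyJ
        exact hne (aux_ball_unique p hGsub hG hJ hI hyJ hy)
      rw [h0, mul_zero]
  · have h0 : ballIndR p M I y = 0 := if_neg hy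
    rw [h0, mul_zero, mul_zero]

/-- Action of `W₀` on the indicator functions: for every `I ∈ G_M`,
`W₀ Ω(p^M|·-I|_p) = f(I)(∫_{p^Mℤ_p}Q₀)·Ω(p^M|·-I|_p) + Σ_{J≠I} f(I)Q₀(|J-I|_p)p^{-M}·Ω(p^M|·-J|_p)`;
in particular the span of the indicators is invariant under `W₀`, with matrix `W⁰ = Wmat`. -/
theorem Wop_on_indicators (p : ℕ) [Fact p.Prime] (Q₀ : ℚ_[p] → ℝ)
    (hpos : ∀ x : ℚ_[p], 0 ≤ Q₀ x)
    (hrad : IsRadial p Q₀)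
    (hsupp : ∀ x : ℚ_[p], ¬ ‖x‖ ≤ 1 → Q₀ x = 0)
    (hint : Integrable Q₀ (haar p))
    (hone : ∫ x in unitBall p, Q₀ x ∂(haar p) = 1)
    (M : ℕ) (hM : 1 ≤ M) (G : Finset ℚ_[p])
    (hGsub : ∀ I ∈ G, ‖I‖ ≤ 1)
    (hG : ∀ x : ℚ_[p], ‖x‖ ≤ 1 → ∃! I : ℚ_[p], I ∈ G ∧ ‖x - I‖ ≤ (p : ℝ) ^ (-(M : ℤ)))
    (fc : ℚ_[p] → ℝ) (hfc : ∀ I ∈ G, 0 < fc I) :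
    ∀ I : {I : ℚ_[p] // I ∈ G}, ∀ x : ℚ_[p],
      Wop p Q₀ fc M G (ballInd p M I.1) x =
        ∑ J ∈ G.attach, ((Wmat p Q₀ fc M G I J : ℝ) : ℂ) * ballInd p M J.1 x := by
  classical
  intro I x
  have hball : ∀ (R : ℤ) (a y : ℚ_[p]), ballInd p R a y = ((ballIndR p R a y : ℝ) : ℂ) := by
    intro R a y; unfold ballInd ballIndR; split <;> simp
  -- LHS reduction
  have hLHS : Wop p Q₀ fc M G (ballInd p M I.1) x
      = ((fc I.1 * ∫ y in ballSet p (M : ℤ) I.1, Q₀ (x - y) ∂(haar p) : ℝ) : ℂ) := by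
    rw [Wop, conv]
    have hpt : (fun y => ((Q₀ (x - y) : ℝ) : ℂ) *
          (((fitness p fc M G y : ℝ) : ℂ) * ballInd p M I.1 y))
        = fun y => ((fc I.1 * (Q₀ (x - y) * ballIndR p M I.1 y) : ℝ) : ℂ) := by
      funext y
      rw [hball]
      have key : Q₀ (x - y) * (fitness p fc M G y * ballIndR p M I.1 y)
          = fc I.1 * (Q₀ (x - y) * ballIndR p M I.1 y) := by
        rw [aux_fitness_mul p fc hGsub hG I.2 y]; ring
      exact_mod_cast key
    rw [hpt, aux_integral_ofReal]
    norm_cast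
    rw [integral_const_mul]
    congr 1
    exact aux_integral_mul_ballIndR p (fun y => Q₀ (x - y)) (M : ℤ) I.1
  rw [hLHS]
  -- RHS reduction
  have hRHS : ∑ J ∈ G.attach, ((Wmat p Q₀ fc M G I J : ℝ) : ℂ) * ballInd p M J.1 x
      = ((∑ J ∈ G.attach, Wmat p Q₀ fc M G I J * ballIndR p M J.1 x : ℝ) : ℂ) := by
    rw [Complex.ofReal_sum]
    refine Finset.sum_congr rfl (fun J _ => ?_)
    rw [hball]; push_cast; ring
  rw [hRHS]
  norm_cast
  -- Real-valued goal
  by_cases hx : ∃ J ∈ G, ‖x - J‖ ≤ (p : ℝ) ^ (-(M : ℤ))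
  · obtain ⟨J, hJG, hxJ⟩ := hx
    have hsum : ∑ K ∈ G.attach, Wmat p Q₀ fc M G I K * ballIndR p M K.1 x
        = Wmat p Q₀ fc M G I ⟨J, hJG⟩ * ballIndR p M J x := by
      refine Finset.sum_eq_single_of_mem
        (f := fun K : {I : ℚ_[p] // I ∈ G} => Wmat p Q₀ fc M G I K * ballIndR p M K.1 x)
        (⟨J, hJG⟩ : {I : ℚ_[p] // I ∈ G}) (Finset.mem_attach _ _) ?_
      intro K _ hK
      have h0 : ballIndR p M K.1 x = 0 := by
        rw [ballIndR, if_neg]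
        intro h
        exact hK (Subtype.ext (aux_ball_unique p hGsub hG K.2 hJG h hxJ))
      simp only [h0, mul_zero]
    rw [hsum, ballIndR, if_pos hxJ, mul_one]
    by_cases hJI : (⟨J, hJG⟩ : {I : ℚ_[p] // I ∈ G}) = I
    · -- diagonal case
      have hxI : ‖x - I.1‖ ≤ (p : ℝ) ^ (-(M : ℤ)) := by
        have : J = I.1 := congrArg Subtype.val hJI
        rwa [this] at hxJ
      rw [Wmat, if_pos hJI.symm]
      congr 1
      -- ∫ y in ball I, Q₀ (x - y) = ∫ z in ball 0, Q₀ z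
      have h1 : ∫ y in ballSet p (M : ℤ) I.1, Q₀ (x - y) ∂(haar p)
          = ∫ y, ballIndR p M I.1 y * Q₀ (x - y) ∂(haar p) := by
        rw [← aux_integral_mul_ballIndR p (fun y => Q₀ (x - y)) (M : ℤ) I.1]
        congr 1; funext y; ring
      set F : ℚ_[p] → ℝ := fun y => ballIndR p M I.1 (x - y) * Q₀ y with hF
      have h2 : (fun y => ballIndR p M I.1 y * Q₀ (x - y)) = fun y => F (x - y) := by
        funext y
        simp only [hF]
        rw [show x - (x - y) = y by ring]
      have h3 : ∫ y, F (x - y) ∂(haar p) = ∫ y, F y ∂(haar p) :=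
        integral_sub_left_eq_self F (haar p) x
      have h4 : F = fun y => Q₀ y * ballIndR p M 0 y := by
        funext y
        have hiff : (‖x - y - I.1‖ ≤ (p : ℝ) ^ (-(M : ℤ)))
            ↔ (‖y - 0‖ ≤ (p : ℝ) ^ (-(M : ℤ))) := by
          rw [sub_zero]
          constructor
          · intro h
            have he : y = (x - I.1) - (x - y - I.1) := by ring
            calc ‖y‖ = ‖(x - I.1) - (x - y - I.1)‖ := by rw [← he]
              _ ≤ max ‖x - I.1‖ ‖x - y - I.1‖ := aux_norm_sub_le_max p _ _
              _ ≤ (p : ℝ) ^ (-(M : ℤ)) := max_le hxI h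
          · intro h
            have he : x - y - I.1 = (x - I.1) - y := by ring
            calc ‖x - y - I.1‖ = ‖(x - I.1) - y‖ := by rw [he]
              _ ≤ max ‖x - I.1‖ ‖y‖ := aux_norm_sub_le_max p _ _
              _ ≤ (p : ℝ) ^ (-(M : ℤ)) := max_le hxI h
        simp only [hF, ballIndR]
        rw [if_congr hiff rfl rfl]
        ring
      rw [h1, h2, h3, h4, aux_integral_mul_ballIndR p Q₀ (M : ℤ) 0]
    · -- off-diagonal case
      have hJI' : J ≠ I.1 := fun h => hJI (Subtype.ext h)
      rw [Wmat, if_neg (fun h => hJI h.symm)]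
      have hd : (p : ℝ) ^ (-(M : ℤ)) < ‖J - I.1‖ := by
        by_contra h
        push_neg at h
        have h1 : ‖I.1 - I.1‖ ≤ (p : ℝ) ^ (-(M : ℤ)) := by
          rw [sub_self, norm_zero]; exact (aux_eps_pos p M).le
        have h2 : ‖I.1 - J‖ ≤ (p : ℝ) ^ (-(M : ℤ)) := by
          rw [show I.1 - J = -(J - I.1) by ring, norm_neg]; exact h
        exact hJI' (aux_ball_unique p hGsub hG hJG I.2 h2 h1)
      have hconst : ∀ y ∈ ballSet p (M : ℤ) I.1, Q₀ (x - y) = Q₀ (J - I.1) := by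
        intro y hy
        have hy' : ‖y - I.1‖ ≤ (p : ℝ) ^ (-(M : ℤ)) := hy
        apply hrad
        apply aux_norm_eq_of_sub_lt
        have he : (x - y) - (J - I.1) = (x - J) - (y - I.1) := by ring
        calc ‖(x - y) - (J - I.1)‖ = ‖(x - J) - (y - I.1)‖ := by rw [he]
          _ ≤ max ‖x - J‖ ‖y - I.1‖ := aux_norm_sub_le_max p _ _
          _ ≤ (p : ℝ) ^ (-(M : ℤ)) := max_le hxJ hy'
          _ < ‖J - I.1‖ := hd
      rw [setIntegral_congr_fun (aux_measurableSet_ballSet p (M : ℤ) I.1) hconst,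
        setIntegral_const, measureReal_def, aux_haar_ball_toReal, smul_eq_mul]
      ring
  · -- x lies in no ball: both sides vanish
    push_neg at hx
    have hzero : ∀ y ∈ ballSet p (M : ℤ) I.1, Q₀ (x - y) = 0 := by
      intro y hy
      have hy' : ‖y - I.1‖ ≤ (p : ℝ) ^ (-(M : ℤ)) := hy
      have hy1 : ‖y‖ ≤ 1 := aux_mem_unitBall p (hGsub I.1 I.2) hy'
      have hx1 : ¬ ‖x‖ ≤ 1 := by
        intro h
        obtain ⟨K, ⟨hK1, hK2⟩, _⟩ := hG x h
        exact absurd hK2 (not_le.mpr (hx K hK1))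
      apply hsupp
      have hnorm : ‖x - y‖ = ‖x‖ := by
        apply aux_norm_eq_of_sub_lt
        rw [show (x - y) - x = -y by ring, norm_neg]
        exact lt_of_le_of_lt hy1 (not_le.mp hx1)
      rw [hnorm]
      exact hx1
    rw [setIntegral_congr_fun (aux_measurableSet_ballSet p (M : ℤ) I.1) hzero,
      setIntegral_const, smul_zero, mul_zero]
    symm
    refine Finset.sum_eq_zero (fun K _ => ?_)
    have h0 : ballIndR p M K.1 x = 0 := by
      rw [ballIndR, if_neg]
      intro h
      exact absurd h (not_le.mpr (hx K.1 K.2))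
    rw [h0, mul_zero]

end PadicES
end

section
/- Let Y : [0,∞) → L²(ℤ_p) be continuously differentiable (in L²) with dY/dt = W₀Y(t) for all t ≥ 0, ∫_{ℤ_p}Y(x,0)dx = 1, and suppose that Ȳ(t) := ∫_{ℤ_p}Y(x,t)dx > 0 for all t ≥ 0. Then Ȳ is differentiable with Ȳ′(t) = ∫_{ℤ_p} f(y)Y(y,t)dy, and the function X(x,t) := Y(x,t)/Ȳ(t) satisfies ∫_{ℤ_p}X(x,t)dx = 1 for all t ≥ 0 and solves the p-adic Eigen–Schuster equation ∂X/∂t = W₀X(·,t) − Φ(t)X(·,t), where Φ(t) = ∫_{ℤ_p} f(y)X(y,t)dy. -/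
open MeasureTheory Filter
open scoped Real Topology ENNReal NNReal

namespace PadicES

variable (p : ℕ) [Fact p.Prime]

/-- If `Y : [0,∞) → L²(ℤ_p)` is differentiable with `dY/dt = W₀Y(t)`,
`∫ Y(0) = 1` and `Ȳ(t) = ∫ Y(t) > 0`, then `Ȳ'(t) = ∫ f Y(t)`, and `X(t) = Y(t)/Ȳ(t)` has
total mass `1` and solves the `p`-adic Eigen–Schuster equation
`∂X/∂t = W₀X - Φ(t)X` with `Φ(t) = ∫ f X(t)`. -/
theorem eigen_schuster_from_linear (p : ℕ) [Fact p.Prime] (Q₀ : ℚ_[p] → ℝ)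
    (hpos : ∀ x : ℚ_[p], 0 ≤ Q₀ x)
    (hrad : IsRadial p Q₀)
    (hsupp : ∀ x : ℚ_[p], ¬ ‖x‖ ≤ 1 → Q₀ x = 0)
    (hint : Integrable Q₀ (haar p)) (hint2 : MemLp Q₀ 2 (haar p))
    (hone : ∫ x in unitBall p, Q₀ x ∂(haar p) = 1)
    (M : ℕ) (hM : 1 ≤ M) (G : Finset ℚ_[p])
    (hGsub : ∀ I ∈ G, ‖I‖ ≤ 1)
    (hG : ∀ x : ℚ_[p], ‖x‖ ≤ 1 → ∃! I : ℚ_[p], I ∈ G ∧ ‖x - I‖ ≤ (p : ℝ) ^ (-(M : ℤ)))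
    (fc : ℚ_[p] → ℝ) (hfc : ∀ I ∈ G, 0 < fc I)
    -- `T` is the operator `W₀` acting on the real Hilbert space `L²(ℤ_p)`
    (T : Lp ℝ 2 ((haar p).restrict (unitBall p)) →L[ℝ]
          Lp ℝ 2 ((haar p).restrict (unitBall p)))
    (hT : ∀ g : Lp ℝ 2 ((haar p).restrict (unitBall p)),
      (T g : ℚ_[p] → ℝ) =ᵐ[(haar p).restrict (unitBall p)] WopR p Q₀ fc M G g)
    (Y : ℝ → Lp ℝ 2 ((haar p).restrict (unitBall p)))
    (hY : ∀ t : ℝ, 0 ≤ t → HasDerivAt Y (T (Y t)) t)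
    (hY0 : ∫ x, Y 0 x ∂((haar p).restrict (unitBall p)) = 1)
    (hYpos : ∀ t : ℝ, 0 ≤ t → 0 < ∫ x, Y t x ∂((haar p).restrict (unitBall p))) :
    -- `Ȳ` is differentiable with `Ȳ'(t) = ∫ f(y) Y(y,t) dy`
    (∀ t : ℝ, 0 ≤ t →
      HasDerivAt (fun s : ℝ => ∫ x, Y s x ∂((haar p).restrict (unitBall p)))
        (∫ x, fitness p fc M G x * Y t x ∂((haar p).restrict (unitBall p))) t) ∧
    -- `X(t) = Y(t)/Ȳ(t)` has total concentration `1`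
    (∀ t : ℝ, 0 ≤ t →
      ∫ x, ((∫ x', Y t x' ∂((haar p).restrict (unitBall p)))⁻¹ • Y t) x
          ∂((haar p).restrict (unitBall p)) = 1) ∧
    -- and solves the `p`-adic Eigen–Schuster equation
    (∀ t : ℝ, 0 ≤ t →
      HasDerivAt
        (fun s : ℝ => (∫ x', Y s x' ∂((haar p).restrict (unitBall p)))⁻¹ • Y s)
        (T ((∫ x', Y t x' ∂((haar p).restrict (unitBall p)))⁻¹ • Y t) -
          ((∫ x', fitness p fc M G x' *
              (((∫ x'', Y t x'' ∂((haar p).restrict (unitBall p)))⁻¹ • Y t) x')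
              ∂((haar p).restrict (unitBall p))) •
            ((∫ x', Y t x' ∂((haar p).restrict (unitBall p)))⁻¹ • Y t))) t) := by
  haveI : (haar p).IsAddHaarMeasure := Measure.isAddHaarMeasure_addHaarMeasure _
  have hsU : MeasurableSet (unitBall p) :=
    (isClosed_le continuous_norm continuous_const).measurableSet
  haveI : IsFiniteMeasure ((haar p).restrict (unitBall p)) := by
    constructor
    rw [Measure.restrict_apply_univ]
    exact (isCompact_unitBall p).measure_lt_top
  -- fitness is measurable
  have hfmeas : Measurable (fitness p fc M G) := by
    apply Finset.measurable_sum
    intro I _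
    apply Measurable.const_mul
    unfold ballIndR
    exact Measurable.ite
      ((isClosed_le ((continuous_id.sub continuous_const).norm) continuous_const).measurableSet)
      measurable_const measurable_const
  -- fitness is bounded
  have hfbdd : ∀ x : ℚ_[p], ‖fitness p fc M G x‖ ≤ ∑ I ∈ G, |fc I| := by
    intro x
    refine (norm_sum_le _ _).trans (Finset.sum_le_sum fun I _ => ?_)
    rw [Real.norm_eq_abs, abs_mul]
    unfold ballIndR
    split_ifs with h
    · simp
    · simp [abs_nonneg]
  -- fitness vanishes off the unit ball
  have hfsupp : ∀ y : ℚ_[p], ¬ ‖y‖ ≤ 1 → fitness p fc M G y = 0 := by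
    intro y hy
    apply Finset.sum_eq_zero
    intro I hI
    suffices h : ballIndR p M I y = 0 by rw [h, mul_zero]
    unfold ballIndR
    rw [if_neg]
    intro hball
    apply hy
    have h1 : ((p : ℝ)) ^ (-(M : ℤ)) ≤ 1 := by
      apply zpow_le_one_of_nonpos₀
      · exact_mod_cast (Fact.out : p.Prime).one_lt.le
      · omega
    calc ‖y‖ = ‖(y - I) + I‖ := by ring_nf
      _ ≤ max ‖y - I‖ ‖I‖ := Padic.nonarchimedean _ _
      _ ≤ 1 := max_le (hball.trans h1) (hGsub I hI)
  -- translation invariance: for y in the unit ball, ∫_{Z_p} Q₀(x-y) dx = 1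
  have htrans : ∀ y : ℚ_[p], ‖y‖ ≤ 1 →
      ∫ x in unitBall p, Q₀ (x - y) ∂(haar p) = 1 := by
    intro y hy
    have hind : (unitBall p).indicator (fun x => Q₀ (x - y)) =
        fun x => (unitBall p).indicator Q₀ (x - y) := by
      funext x
      by_cases hx : x ∈ unitBall p
      · have hx' : x - y ∈ unitBall p := by
          simp only [unitBall, Set.mem_setOf_eq] at hx ⊢
          calc ‖x - y‖ ≤ max ‖x‖ ‖-y‖ := by
                have := Padic.nonarchimedean x (-y); simpa [sub_eq_add_neg] using this
            _ ≤ 1 := by rw [norm_neg]; exact max_le hx hy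
        rw [Set.indicator_of_mem hx, Set.indicator_of_mem hx']
      · have hx' : x - y ∉ unitBall p := by
          intro hmem
          apply hx
          simp only [unitBall, Set.mem_setOf_eq] at hmem ⊢
          calc ‖x‖ = ‖(x - y) + y‖ := by ring_nf
            _ ≤ max ‖x - y‖ ‖y‖ := Padic.nonarchimedean _ _
            _ ≤ 1 := max_le hmem hy
        rw [Set.indicator_of_notMem hx, Set.indicator_of_notMem hx']
    rw [← integral_indicator hsU, hind,
      integral_sub_right_eq_self ((unitBall p).indicator Q₀) y,
      integral_indicator hsU]
    exact hone
  -- Key identity : for every g ∈ L², ∫ T g = ∫ fitness * g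
  have keyT : ∀ g : Lp ℝ 2 ((haar p).restrict (unitBall p)), ∫ x, (T g : ℚ_[p] → ℝ) x ∂((haar p).restrict (unitBall p)) =
      ∫ x, fitness p fc M G x * g x ∂((haar p).restrict (unitBall p)) := by
    intro g
    have h1 : ∫ x, (T g : ℚ_[p] → ℝ) x ∂((haar p).restrict (unitBall p)) = ∫ x, WopR p Q₀ fc M G g x ∂((haar p).restrict (unitBall p)) :=
      integral_congr_ae (hT g)
    set H : ℚ_[p] → ℝ := fun y => fitness p fc M G y * g y with hHdef
    -- H is integrable for ((haar p).restrict (unitBall p))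
    have hHmu : Integrable H ((haar p).restrict (unitBall p)) := by
      apply Integrable.bdd_mul ((Lp.memLp g).integrable one_le_two)
        hfmeas.aestronglyMeasurable
      exact Filter.Eventually.of_forall hfbdd
    -- H vanishes off the unit ball
    have hHzero : ∀ y : ℚ_[p], y ∉ unitBall p → H y = 0 := by
      intro y hy
      have : ¬ ‖y‖ ≤ 1 := hy
      simp only [hHdef, hfsupp y this, zero_mul]
    have hHind : H = (unitBall p).indicator H := by
      funext y
      by_cases hy : y ∈ unitBall p
      · rw [Set.indicator_of_mem hy]
      · rw [Set.indicator_of_notMem hy, hHzero y hy]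
    -- H is integrable for the full Haar measure
    have hHν : Integrable H (haar p) := by
      rw [hHind]
      exact (integrable_indicator_iff hsU).mpr hHmu
    -- the convolution integrand is integrable on the product
    have hF : Integrable (fun q : ℚ_[p] × ℚ_[p] => H q.2 * Q₀ (q.1 - q.2))
        ((haar p).prod (haar p)) := by
      have := hHν.convolution_integrand (ContinuousLinearMap.mul ℝ ℝ) hint
      simpa using this
    have hFmu : Integrable (fun q : ℚ_[p] × ℚ_[p] => H q.2 * Q₀ (q.1 - q.2)) (((haar p).restrict (unitBall p)).prod ((haar p).restrict (unitBall p))) := by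
      rw [Measure.prod_restrict]
      exact hF.restrict
    -- rewrite the operator's integral
    have h2 : ∀ x : ℚ_[p], WopR p Q₀ fc M G g x = ∫ y, H y * Q₀ (x - y) ∂((haar p).restrict (unitBall p)) := by
      intro x
      have e1 : WopR p Q₀ fc M G g x = ∫ y, H y * Q₀ (x - y) ∂(haar p) := by
        unfold WopR convR
        exact integral_congr_ae (Filter.Eventually.of_forall fun y => mul_comm _ _)
      rw [e1]
      symm
      apply setIntegral_eq_integral_of_forall_compl_eq_zero
      intro y hy
      rw [hHzero y hy, zero_mul]
    calc ∫ x, (T g : ℚ_[p] → ℝ) x ∂((haar p).restrict (unitBall p))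
        = ∫ x, ∫ y, H y * Q₀ (x - y) ∂((haar p).restrict (unitBall p)) ∂((haar p).restrict (unitBall p)) := by
          rw [h1]; exact integral_congr_ae (Filter.Eventually.of_forall fun x => h2 x)
      _ = ∫ y, ∫ x, H y * Q₀ (x - y) ∂((haar p).restrict (unitBall p)) ∂((haar p).restrict (unitBall p)) := integral_integral_swap hFmu
      _ = ∫ y, H y * ∫ x, Q₀ (x - y) ∂((haar p).restrict (unitBall p)) ∂((haar p).restrict (unitBall p)) := by
          apply integral_congr_ae
          filter_upwards with y
          exact integral_const_mul _ _
      _ = ∫ y, H y ∂((haar p).restrict (unitBall p)) := by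
          apply integral_congr_ae
          filter_upwards [ae_restrict_mem hsU] with y hy
          rw [htrans y hy, mul_one]
      _ = ∫ x, fitness p fc M G x * g x ∂((haar p).restrict (unitBall p)) := rfl
  -- the integral functional as a continuous linear map
  have honeL2 : MemLp (fun _ : ℚ_[p] => (1 : ℝ)) 2 ((haar p).restrict (unitBall p)) := memLp_const 1
  set oneL : Lp ℝ 2 ((haar p).restrict (unitBall p)) := honeL2.toLp _ with honeLdef
  set φ : Lp ℝ 2 ((haar p).restrict (unitBall p)) →L[ℝ] ℝ := innerSL ℝ oneL with hφdef
  have hφeq : ∀ g : Lp ℝ 2 ((haar p).restrict (unitBall p)), φ g = ∫ x, g x ∂((haar p).restrict (unitBall p)) := by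
    intro g
    have : φ g = ∫ x, (oneL x) * (g x) ∂((haar p).restrict (unitBall p)) := by
      rw [hφdef]
      simp only [innerSL_apply_apply]
      rw [L2.inner_def]
      apply integral_congr_ae
      filter_upwards with x
      simp [RCLike.inner_apply, starRingEnd_apply, mul_comm]
    rw [this]
    apply integral_congr_ae
    filter_upwards [honeL2.coeFn_toLp] with x hx
    rw [honeLdef] at *
    rw [hx, one_mul]
  -- Part 1
  have part1 : ∀ t : ℝ, 0 ≤ t →
      HasDerivAt (fun s : ℝ => ∫ x, Y s x ∂((haar p).restrict (unitBall p)))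
        (∫ x, fitness p fc M G x * Y t x ∂((haar p).restrict (unitBall p))) t := by
    intro t ht
    have hd : HasDerivAt (fun s => φ (Y s)) (φ (T (Y t))) t :=
      (φ.hasFDerivAt).comp_hasDerivAt t (hY t ht)
    have he : (fun s => φ (Y s)) = fun s => ∫ x, Y s x ∂((haar p).restrict (unitBall p)) := funext fun s => hφeq (Y s)
    rw [he, hφeq, keyT] at hd
    exact hd
  refine ⟨part1, ?_, ?_⟩
  -- Part 2
  · intro t ht
    have hc : (0 : ℝ) < ∫ x, Y t x ∂((haar p).restrict (unitBall p)) := hYpos t ht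
    have : ∫ x, ((∫ x', Y t x' ∂((haar p).restrict (unitBall p)))⁻¹ • Y t) x ∂((haar p).restrict (unitBall p))
        = (∫ x', Y t x' ∂((haar p).restrict (unitBall p)))⁻¹ * ∫ x, Y t x ∂((haar p).restrict (unitBall p)) := by
      rw [integral_congr_ae (Lp.coeFn_smul _ _)]
      simp only [Pi.smul_apply, smul_eq_mul]
      rw [integral_const_mul]
    rw [this, inv_mul_cancel₀ hc.ne']
  -- Part 3
  · intro t ht
    set c : ℝ → ℝ := fun s => ∫ x, Y s x ∂((haar p).restrict (unitBall p)) with hcdef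
    have hct : c t ≠ 0 := (hYpos t ht).ne'
    set c' : ℝ := ∫ x, fitness p fc M G x * Y t x ∂((haar p).restrict (unitBall p)) with hc'def
    have hdc : HasDerivAt c c' t := part1 t ht
    have hinv : HasDerivAt (fun s => (c s)⁻¹) (-c' / (c t) ^ 2) t := hdc.inv hct
    have hsmul : HasDerivAt (fun s => (c s)⁻¹ • Y s)
        ((c t)⁻¹ • T (Y t) + (-c' / (c t) ^ 2) • Y t) t := hinv.smul (hY t ht)
    have hTs : T ((c t)⁻¹ • Y t) = (c t)⁻¹ • T (Y t) := map_smul T _ _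
    have hΦ : (∫ x', fitness p fc M G x' * (((c t)⁻¹ • Y t) x') ∂((haar p).restrict (unitBall p))) = (c t)⁻¹ * c' := by
      have e1 : (∫ x', fitness p fc M G x' * (((c t)⁻¹ • Y t) x') ∂((haar p).restrict (unitBall p)))
          = ∫ x', (c t)⁻¹ * (fitness p fc M G x' * Y t x') ∂((haar p).restrict (unitBall p)) := by
        apply integral_congr_ae
        filter_upwards [Lp.coeFn_smul ((c t)⁻¹) (Y t)] with x hx
        rw [hx]
        simp only [Pi.smul_apply, smul_eq_mul]
        ring
      rw [e1, integral_const_mul]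
    have hgoal : T ((c t)⁻¹ • Y t) -
        ((∫ x', fitness p fc M G x' * (((c t)⁻¹ • Y t) x') ∂((haar p).restrict (unitBall p))) • ((c t)⁻¹ • Y t))
        = (c t)⁻¹ • T (Y t) + (-c' / (c t) ^ 2) • Y t := by
      rw [hTs, hΦ]
      rw [smul_smul]
      rw [sub_eq_add_neg, ← neg_smul]
      congr 1
      congr 1
      rw [pow_two, div_eq_mul_inv, mul_inv]
      ring
    rw [← hgoal] at hsmul
    exact hsmul

end PadicES
end

section
/- Assume Hypothesis A (∫_{p^Mℤ_p}Q₀(|z|_p)dz ∈ (1/2,1)) and Hypothesis B: there exist a negative integer r₀ and I₀ ∈ G_M with Q̂₀(p^{1−r₀})·f(I₀) > μ_max, where μ_max is the maximum of the real parts of the eigenvalues of W⁰. Let c ∈ ℝ^{G_M} have all entries positive and set Ȳ(t) := p^{−M}Σ_{I∈G_M}(e^{tW⁰}c)_I. Then Ȳ(t) > 0 for all t ≥ 0 and lim_{t→∞} p^{−r₀/2}·e^{t·Q̂₀(p^{1−r₀})f(I₀)} / Ȳ(t) = +∞. In particular, any wavelet coefficient e^{t·Q̂₀(p^{1−r₀})f(I₀)}·C/Ȳ(t)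 of the normalized solution of the p-adic Eigen–Schuster model with C ≠ 0 does not tend to zero, i.e. the model admits a quasispecies solution. -/
open MeasureTheory Filter
open scoped Real Topology ENNReal NNReal

namespace PadicES

variable (p : ℕ) [Fact p.Prime]

section AuxQS
open NormedSpace Filter

variable {n : Type*} [Fintype n] [DecidableEq n]

-- entry evaluation CLM
noncomputable def entryCLM (𝕜 : Type*) [RCLike 𝕜] (i j : n) :
    letI := Matrix.linftyOpNormedAddCommGroup (m := n) (n := n) (α := 𝕜)
    Matrix n n 𝕜 →L[𝕜] 𝕜 :=
  letI := Matrix.linftyOpNormedAddCommGroup (m := n) (n := n) (α := 𝕜)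
  letI := Matrix.linftyOpNormedSpace (R := 𝕜) (m := n) (n := n) (α := 𝕜)
  LinearMap.toContinuousLinearMap
    { toFun := fun M => M i j
      map_add' := fun _ _ => rfl
      map_smul' := fun _ _ => rfl }

lemma matrix_pow_nonneg {A : Matrix n n ℝ} (hA : ∀ i j, 0 ≤ A i j) (k : ℕ) :
    ∀ i j, 0 ≤ (A ^ k) i j := by
  induction k with
  | zero => intro i j; rw [pow_zero]; rcases eq_or_ne i j with h | h <;>
      simp [Matrix.one_apply, h]
  | succ k ih =>
    intro i j
    rw [pow_succ, Matrix.mul_apply]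
    exact Finset.sum_nonneg fun l _ => mul_nonneg (ih i l) (hA l j)

lemma one_le_exp_entry {A : Matrix n n ℝ} (hA : ∀ i j, 0 ≤ A i j) (i j : n) :
    (1 : Matrix n n ℝ) i j ≤ exp A i j := by
  letI := Matrix.linftyOpNormedRing (n := n) (α := ℝ)
  letI := Matrix.linftyOpNormedAlgebra (R := ℝ) (n := n) (α := ℝ)
  have hs : Summable fun k : ℕ => ((k.factorial : ℝ))⁻¹ • A ^ k := expSeries_summable' A
  have hmap := ContinuousLinearMap.map_tsum (entryCLM ℝ i j) hs
  have hexp : exp A i j = ∑' k : ℕ, ((k.factorial : ℝ))⁻¹ • (A ^ k) i j := by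
    rw [exp_eq_tsum ℝ]
    exact hmap
  rw [hexp]
  have hsum : Summable fun k : ℕ => ((k.factorial : ℝ))⁻¹ • (A ^ k) i j := by
    exact hs.map (entryCLM ℝ i j) (entryCLM ℝ i j).continuous
  have h0 : ((Nat.factorial 0 : ℝ))⁻¹ • (A ^ 0) i j = (1 : Matrix n n ℝ) i j := by simp
  calc (1 : Matrix n n ℝ) i j = ((Nat.factorial 0 : ℝ))⁻¹ • (A ^ 0) i j := h0.symm
    _ ≤ ∑' k : ℕ, ((k.factorial : ℝ))⁻¹ • (A ^ k) i j :=
        Summable.le_tsum hsum 0 fun k _ =>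
          smul_nonneg (by positivity) (matrix_pow_nonneg hA k i j)



noncomputable def mulVecCLM (v : n → ℂ) :
    letI := Matrix.linftyOpNormedAddCommGroup (m := n) (n := n) (α := ℂ)
    Matrix n n ℂ →L[ℂ] (n → ℂ) :=
  letI := Matrix.linftyOpNormedAddCommGroup (m := n) (n := n) (α := ℂ)
  letI := Matrix.linftyOpNormedSpace (R := ℂ) (m := n) (n := n) (α := ℂ)
  LinearMap.toContinuousLinearMap
    { toFun := fun M => M.mulVec v
      map_add' := fun M N => Matrix.add_mulVec M N v
      map_smul' := fun a M => (Matrix.smul_mulVec a M v) }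

lemma exp_smul_one (c : ℂ) :
    exp (c • (1 : Matrix n n ℂ)) = Complex.exp c • (1 : Matrix n n ℂ) := by
  have h1 : c • (1 : Matrix n n ℂ) = Matrix.diagonal (fun _ => c) := by
    ext i j; simp [Matrix.diagonal_apply, Matrix.one_apply]
  rw [h1, Matrix.exp_diagonal]
  ext i j
  simp [Matrix.diagonal_apply, Matrix.one_apply, Pi.coe_exp, Complex.exp_eq_exp_ℂ]

lemma tendsto_pow_mul_exp_neg' (a : ℝ) (ha : a < 0) (j : ℕ) :
    Tendsto (fun t : ℝ => t ^ j * Real.exp (a * t)) atTop (nhds 0) := by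
  have h1 : Tendsto (fun t : ℝ => (-a) * t) atTop atTop :=
    Tendsto.const_mul_atTop (by linarith) tendsto_id
  have h2 := (Real.tendsto_pow_mul_exp_neg_atTop_nhds_zero j).comp h1
  have h3 : Tendsto (fun t : ℝ => ((-a) * t) ^ j * Real.exp (a * t)) atTop (nhds 0) := by
    refine h2.congr fun t => ?_
    simp only [Function.comp]
    ring_nf
  have h4 := h3.const_mul ((-a) ^ j)⁻¹
  rw [mul_zero] at h4
  refine h4.congr fun t => ?_
  rw [mul_pow]
  have : (-a) ^ j ≠ 0 := pow_ne_zero _ (by linarith)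
  field_simp

lemma tendsto_exp_smul_mulVec_nilpotent (B : Matrix n n ℂ) (z : ℂ) (hz : z.re < 0) (k : ℕ)
    (v : n → ℂ) (hv : ((B - z • 1) ^ k).mulVec v = 0) :
    Tendsto (fun t : ℝ => (exp (t • B)).mulVec v) atTop (nhds 0) := by
  letI := Matrix.linftyOpNormedRing (n := n) (α := ℂ)
  letI := Matrix.linftyOpNormedAlgebra (R := ℂ) (n := n) (α := ℂ)
  set N : Matrix n n ℂ := B - z • 1 with hN
  have key : ∀ t : ℝ, (exp (t • B)).mulVec v =
      ∑ j ∈ Finset.range k,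
        (Complex.exp ((t : ℂ) * z) * ((j.factorial : ℂ))⁻¹ * (t : ℂ) ^ j) • (N ^ j).mulVec v := by
    intro t
    have hsplit : t • B = ((t : ℂ) * z) • (1 : Matrix n n ℂ) + t • N := by
      have : B = z • (1 : Matrix n n ℂ) + N := by rw [hN]; abel
      rw [this, smul_add]
      congr 1
      rw [← algebraMap_smul ℂ t (z • (1 : Matrix n n ℂ)), smul_smul]
      norm_num [Complex.ofReal_mul]
    have hcomm : Commute (((t : ℂ) * z) • (1 : Matrix n n ℂ)) (t • N) :=
      (Commute.one_left (t • N)).smul_left _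
    have hexp : exp (t • B) =
        Complex.exp ((t : ℂ) * z) • exp (t • N) := by
      rw [hsplit, Matrix.exp_add_of_commute _ _ hcomm, exp_smul_one, smul_mul_assoc, one_mul]
    rw [hexp, Matrix.smul_mulVec]
    have hs : Summable fun j : ℕ => ((j.factorial : ℂ))⁻¹ • (t • N) ^ j :=
      expSeries_summable' (t • N)
    have hmap := ContinuousLinearMap.map_tsum (mulVecCLM v) hs
    have h5 : (exp (t • N)).mulVec v =
        ∑' j : ℕ, ((j.factorial : ℂ))⁻¹ • ((t • N) ^ j).mulVec v := by
      rw [exp_eq_tsum ℂ]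
      simpa [mulVecCLM] using hmap
    have hzero : ∀ j ∉ Finset.range k,
        ((j.factorial : ℂ))⁻¹ • ((t • N) ^ j).mulVec v = 0 := by
      intro j hj
      rw [Finset.mem_range, not_lt] at hj
      have heq : (t ^ (j - k) • N ^ (j - k)) * (t ^ k • N ^ k) = (t • N) ^ j := by
        rw [smul_mul_smul_comm, ← pow_add, ← pow_add, Nat.sub_add_cancel hj, ← smul_pow]
      rw [← heq, ← Matrix.mulVec_mulVec, Matrix.smul_mulVec, Matrix.smul_mulVec,
        hv, smul_zero, Matrix.mulVec_zero, smul_zero, smul_zero]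
    rw [h5, tsum_eq_sum hzero, Finset.smul_sum]
    refine Finset.sum_congr rfl fun j hj => ?_
    rw [smul_pow, Matrix.smul_mulVec,
      ← algebraMap_smul ℂ (t ^ j) ((N ^ j).mulVec v), smul_smul, smul_smul]
    congr 1
    simp [Complex.ofReal_pow]
  simp only [key]
  have : (0 : n → ℂ) = ∑ j ∈ Finset.range k, (0 : n → ℂ) := by simp
  rw [this]
  refine tendsto_finset_sum _ fun j _ => ?_
  have hscal : Tendsto
      (fun t : ℝ => Complex.exp ((t : ℂ) * z) * ((j.factorial : ℂ))⁻¹ * (t : ℂ) ^ j)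
      atTop (nhds 0) := by
    have hg : Tendsto (fun t : ℝ => ((j.factorial : ℝ))⁻¹ * (t ^ j * Real.exp (z.re * t)))
        atTop (nhds 0) := by
      simpa using (tendsto_pow_mul_exp_neg' z.re hz j).const_mul ((j.factorial : ℝ))⁻¹
    refine squeeze_zero_norm' ?_ hg
    filter_upwards [eventually_ge_atTop (0 : ℝ)] with t ht
    rw [norm_mul, norm_mul, Complex.norm_exp]
    have h1 : ((t : ℂ) * z).re = t * z.re := by simp
    rw [h1, norm_inv, norm_pow, Complex.norm_natCast, Complex.norm_real,
      Real.norm_of_nonneg ht]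
    rw [mul_comm t z.re]
    ring_nf
    exact le_of_eq (by ring)
  have := hscal.smul_const ((N ^ j).mulVec v)
  simpa using this

lemma tendsto_exp_mulVec_shifted (A : Matrix n n ℂ) (lam : ℝ)
    (hspec : ∀ z ∈ spectrum ℂ A, z.re < lam) (v : n → ℂ) :
    Tendsto (fun t : ℝ => (exp (t • (A - (lam : ℂ) • 1))).mulVec v) atTop (nhds 0) := by
  set L : Module.End ℂ (n → ℂ) := Matrix.toLinAlgEquiv' A with hL
  set C : (n → ℂ) → Prop :=
    fun w => Tendsto (fun t : ℝ => (exp (t • (A - (lam : ℂ) • 1))).mulVec w)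
      atTop (nhds 0) with hC
  have hzero : C 0 := by
    simp only [hC, Matrix.mulVec_zero]
    exact tendsto_const_nhds
  have hadd : ∀ x y, C x → C y → C (x + y) := by
    intro x y hx hy
    simp only [hC, Matrix.mulVec_add] at *
    simpa using hx.add hy
  have hmem : v ∈ (⊤ : Submodule ℂ (n → ℂ)) := trivial
  rw [← Module.End.iSup_maxGenEigenspace_eq_top L] at hmem
  refine Submodule.iSup_induction _ (motive := C) hmem ?_ hzero hadd
  intro μ x hx
  rcases eq_or_ne x 0 with rfl | hx0
  · exact hzero
  · rw [Module.End.maxGenEigenspace, Module.End.mem_genEigenspace] at hx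
    obtain ⟨l, -, hker⟩ := hx
    rw [LinearMap.mem_ker] at hker
    -- μ is an eigenvalue of L, hence in the spectrum of A
    have hgen : L.HasGenEigenvalue μ l := by
      rw [Module.End.hasGenEigenvalue_iff]
      intro hbot
      apply hx0
      have : x ∈ L.genEigenspace μ l := by
        rw [Module.End.mem_genEigenspace]
        exact ⟨l, le_refl _, LinearMap.mem_ker.mpr hker⟩
      rw [hbot] at this
      simpa using this
    have heig : L.HasEigenvalue μ := Module.End.hasEigenvalue_of_hasGenEigenvalue hgen
    have hspecL : μ ∈ spectrum ℂ L := Module.End.hasEigenvalue_iff_mem_spectrum.mp heig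
    have hμA : μ ∈ spectrum ℂ A := by
      rwa [hL, AlgEquiv.spectrum_eq Matrix.toLinAlgEquiv' A] at hspecL
    have hre : (μ - (lam : ℂ)).re < 0 := by
      have := hspec μ hμA
      simp only [Complex.sub_re, Complex.ofReal_re]
      linarith
    -- translate the kernel condition to matrices
    have hmat : (((A - (lam : ℂ) • 1) - (μ - (lam : ℂ)) • 1) ^ l).mulVec x = 0 := by
      have h1 : (A - (lam : ℂ) • 1) - (μ - (lam : ℂ)) • 1 = A - μ • 1 := by
        rw [sub_smul]; abel
      have h2 : Matrix.toLinAlgEquiv' ((A - μ • 1) ^ l) = (L - μ • 1) ^ l := by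
        rw [map_pow, map_sub, _root_.map_smul, map_one, hL]
      have h3 : ((A - μ • 1) ^ l).mulVec x = ((L - μ • 1) ^ l) x := by
        rw [← h2, Matrix.toLinAlgEquiv'_apply]
      rw [h1, h3, hker]
    exact tendsto_exp_smul_mulVec_nilpotent (A - (lam : ℂ) • 1) (μ - (lam : ℂ)) hre l x hmat

lemma exp_map_ofReal (A : Matrix n n ℝ) :
    (exp A).map Complex.ofReal = exp (A.map Complex.ofReal) := by
  have hf : Continuous (Complex.ofRealHom.mapMatrix : Matrix n n ℝ →+* Matrix n n ℂ) := by
    have : ⇑(Complex.ofRealHom.mapMatrix : Matrix n n ℝ →+* Matrix n n ℂ) =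
        fun M : Matrix n n ℝ => M.map Complex.ofReal := by
      funext M; rw [RingHom.mapMatrix_apply]; rfl
    rw [this]
    exact Continuous.matrix_map continuous_id Complex.continuous_ofReal
  open scoped Matrix.Norms.Operator in
  have h := map_exp (Complex.ofRealHom.mapMatrix : Matrix n n ℝ →+* Matrix n n ℂ) hf A
  simp only [RingHom.mapMatrix_apply] at h
  exact h

end AuxQS

/-- Under Hypotheses A and B, the `p`-adic Eigen–Schuster model admits a
quasispecies solution: the wavelet coefficient `p^{-r₀/2} e^{t Q̂₀(p^{1-r₀}) f(I₀)} / Ȳ(t)`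
tends to `+∞`, so any nonzero oscillatory term of the normalized solution survives in the
long term. -/
theorem quasispecies_exists (p : ℕ) [Fact p.Prime] (Q₀ : ℚ_[p] → ℝ)
    (hpos : ∀ x : ℚ_[p], 0 ≤ Q₀ x)
    (hrad : IsRadial p Q₀)
    (hsupp : ∀ x : ℚ_[p], ¬ ‖x‖ ≤ 1 → Q₀ x = 0)
    (hint : Integrable Q₀ (haar p)) (hint2 : MemLp Q₀ 2 (haar p))
    (hone : ∫ x in unitBall p, Q₀ x ∂(haar p) = 1)
    (M : ℕ) (hM : 1 ≤ M) (G : Finset ℚ_[p])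
    (hGsub : ∀ I ∈ G, ‖I‖ ≤ 1)
    (hG : ∀ x : ℚ_[p], ‖x‖ ≤ 1 → ∃! I : ℚ_[p], I ∈ G ∧ ‖x - I‖ ≤ (p : ℝ) ^ (-(M : ℤ)))
    (fc : ℚ_[p] → ℝ) (hfc : ∀ I ∈ G, 0 < fc I)
    -- Hypothesis A
    (hA : (∫ z in ballSet p M 0, Q₀ z ∂(haar p)) ∈ Set.Ioo (1/2 : ℝ) 1)
    -- `μ_max` is the maximum of the real parts of the eigenvalues of `W⁰`
    (μmax : ℝ)
    (hμ : IsGreatest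
      {x : ℝ | ∃ z ∈ spectrum ℂ ((Wmat p Q₀ fc M G).map Complex.ofReal), z.re = x} μmax)
    -- Hypothesis B
    (r₀ : ℤ) (hr₀ : r₀ < 0) (I₀ : {I : ℚ_[p] // I ∈ G})
    (hB : μmax <
      (fourierT p (fun y => (Q₀ y : ℂ)) ((p : ℚ_[p]) ^ (r₀ - 1))).re * fc I₀.1)
    -- initial coefficient vector with positive entries
    (c : {I : ℚ_[p] // I ∈ G} → ℝ) (hc : ∀ I, 0 < c I) :
    -- `Ȳ(t) > 0`
    (∀ t : ℝ, 0 ≤ t →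
      0 < (p : ℝ) ^ (-(M : ℤ)) *
        ∑ I, (NormedSpace.exp (t • Wmat p Q₀ fc M G)).mulVec c I) ∧
    -- the normalized wavelet coefficient blows up
    Filter.Tendsto
      (fun t : ℝ =>
        (p : ℝ) ^ (-(r₀ : ℝ) / 2) *
          Real.exp (t * ((fourierT p (fun y => (Q₀ y : ℂ))
              ((p : ℚ_[p]) ^ (r₀ - 1))).re * fc I₀.1)) /
          ((p : ℝ) ^ (-(M : ℤ)) *
            ∑ I, (NormedSpace.exp (t • Wmat p Q₀ fc M G)).mulVec c I))
      Filter.atTop Filter.atTop ∧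
    -- hence no nonzero oscillatory coefficient of the normalized solution tends to zero
    (∀ C : ℝ, C ≠ 0 →
      ¬ Filter.Tendsto
        (fun t : ℝ =>
          Real.exp (t * ((fourierT p (fun y => (Q₀ y : ℂ))
              ((p : ℚ_[p]) ^ (r₀ - 1))).re * fc I₀.1)) * C /
            ((p : ℝ) ^ (-(M : ℤ)) *
              ∑ I, (NormedSpace.exp (t • Wmat p Q₀ fc M G)).mulVec c I))
        Filter.atTop (nhds 0)) := by

  classical
  haveI : Nonempty {I : ℚ_[p] // I ∈ G} := ⟨I₀⟩
  set q : ℝ := (p : ℝ) ^ (-(M : ℤ)) with hqdef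
  set A : Matrix {I : ℚ_[p] // I ∈ G} {I : ℚ_[p] // I ∈ G} ℝ := Wmat p Q₀ fc M G with hA'
  set lam : ℝ :=
    (fourierT p (fun y => (Q₀ y : ℂ)) ((p : ℚ_[p]) ^ (r₀ - 1))).re * fc I₀.1 with hlam
  have hppos : (0 : ℝ) < (p : ℝ) := by exact_mod_cast (Fact.out : p.Prime).pos
  have hq : (0 : ℝ) < q := by rw [hqdef]; positivity
  -- entries of A are nonnegative
  have hAnn : ∀ I J, 0 ≤ A I J := by
    intro I J
    rw [hA', Wmat]
    split
    · exact mul_nonneg (hfc I.1 I.2).le (le_trans (by norm_num) hA.1.le)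
    · exact mul_nonneg (mul_nonneg (hfc I.1 I.2).le (hpos _)) (zpow_nonneg hppos.le _)
  -- positivity of the components of the solution
  have hcomp : ∀ t : ℝ, 0 ≤ t → ∀ I, 0 < (NormedSpace.exp (t • A)).mulVec c I := by
    intro t ht I
    have htA : ∀ i j, 0 ≤ (t • A) i j := by
      intro i j
      rw [Matrix.smul_apply, smul_eq_mul]
      exact mul_nonneg ht (hAnn i j)
    have hE := fun i j => one_le_exp_entry htA i j
    have hnn : ∀ J : {I : ℚ_[p] // I ∈ G},
        (0 : ℝ) ≤ (1 : Matrix {I : ℚ_[p] // I ∈ G} {I : ℚ_[p] // I ∈ G} ℝ) I J := by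
      intro J; rw [Matrix.one_apply]; split <;> norm_num
    have hform : (NormedSpace.exp (t • A)).mulVec c I
        = ∑ J, (NormedSpace.exp (t • A)) I J * c J := by
      simp [Matrix.mulVec, dotProduct]
    rw [hform]
    refine Finset.sum_pos' (fun J _ => mul_nonneg (le_trans (hnn J) (hE I J)) (hc J).le) ?_
    refine ⟨I, Finset.mem_univ I, mul_pos (lt_of_lt_of_le ?_ (hE I I)) (hc I)⟩
    rw [Matrix.one_apply_eq]; norm_num
  have hsum : ∀ t : ℝ, 0 ≤ t → 0 < ∑ I, (NormedSpace.exp (t • A)).mulVec c I :=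
    fun t ht => Finset.sum_pos (fun I _ => hcomp t ht I) Finset.univ_nonempty
  have part1 : ∀ t : ℝ, 0 ≤ t →
      0 < q * ∑ I, (NormedSpace.exp (t • A)).mulVec c I :=
    fun t ht => mul_pos hq (hsum t ht)
  -- spectral bound
  set Ac : Matrix {I : ℚ_[p] // I ∈ G} {I : ℚ_[p] // I ∈ G} ℂ :=
    A.map Complex.ofReal with hAc
  have hspec : ∀ z ∈ spectrum ℂ Ac, z.re < lam := fun z hz =>
    lt_of_le_of_lt (hμ.2 ⟨z, hz, rfl⟩) hB
  set cc : {I : ℚ_[p] // I ∈ G} → ℂ := fun J => (c J : ℂ) with hcc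
  set Bc : Matrix {I : ℚ_[p] // I ∈ G} {I : ℚ_[p] // I ∈ G} ℂ :=
    Ac - (lam : ℂ) • 1 with hBc
  have hv : Filter.Tendsto (fun t : ℝ => (NormedSpace.exp (t • Bc)).mulVec cc)
      Filter.atTop (nhds 0) := tendsto_exp_mulVec_shifted Ac lam hspec cc
  set S : ℝ → ℂ := fun t => ∑ I, (NormedSpace.exp (t • Bc)).mulVec cc I with hS
  have hStend : Filter.Tendsto S Filter.atTop (nhds 0) := by
    have h0 : Filter.Tendsto (fun t : ℝ => ∑ I, (NormedSpace.exp (t • Bc)).mulVec cc I)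
        Filter.atTop (nhds (∑ _I : {I : ℚ_[p] // I ∈ G}, (0 : ℂ))) := by
      refine tendsto_finset_sum _ fun I _ => ?_
      exact ((continuous_apply I).tendsto 0).comp hv
    simpa [hS] using h0
  set g : ℝ → ℝ := fun t => (S t).re with hg
  have hgtend : Filter.Tendsto g Filter.atTop (nhds 0) := by
    have := (Complex.continuous_re.tendsto 0).comp hStend
    exact this
  -- the key identity
  have hkey : ∀ t : ℝ,
      ∑ I, (NormedSpace.exp (t • A)).mulVec c I = Real.exp (t * lam) * g t := by
    intro t
    letI := Matrix.linftyOpNormedRing (n := {I : ℚ_[p] // I ∈ G}) (α := ℂ)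
    letI := Matrix.linftyOpNormedAlgebra (R := ℂ) (n := {I : ℚ_[p] // I ∈ G}) (α := ℂ)
    have h0 : t • ((lam : ℂ) • (1 : Matrix {I : ℚ_[p] // I ∈ G} {I : ℚ_[p] // I ∈ G} ℂ))
        = ((t * lam : ℝ) : ℂ) • (1 : Matrix {I : ℚ_[p] // I ∈ G} {I : ℚ_[p] // I ∈ G} ℂ) := by
      rw [← algebraMap_smul ℂ t ((lam : ℂ) •
        (1 : Matrix {I : ℚ_[p] // I ∈ G} {I : ℚ_[p] // I ∈ G} ℂ)), smul_smul]
      norm_num [Complex.ofReal_mul]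
    have hsplit : t • Ac = ((t * lam : ℝ) : ℂ) • 1 + t • Bc := by
      rw [hBc, smul_sub, h0]; abel
    have hcomm : Commute (((t * lam : ℝ) : ℂ) •
        (1 : Matrix {I : ℚ_[p] // I ∈ G} {I : ℚ_[p] // I ∈ G} ℂ)) (t • Bc) :=
      (Commute.one_left (t • Bc)).smul_left _
    have hexpc : NormedSpace.exp (t • Ac)
        = Complex.exp ((t * lam : ℝ) : ℂ) • NormedSpace.exp (t • Bc) := by
      rw [hsplit, Matrix.exp_add_of_commute _ _ hcomm, exp_smul_one, smul_mul_assoc, one_mul]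
    have hmapsm : (t • A).map Complex.ofReal = t • Ac := by
      ext i j
      simp [hAc, Matrix.map_apply, Matrix.smul_apply, smul_eq_mul, Complex.real_smul,
        Complex.ofReal_mul]
    have hofReal : (NormedSpace.exp (t • A)).map Complex.ofReal
        = NormedSpace.exp (t • Ac) := by
      rw [exp_map_ofReal, hmapsm]
    have hcastI : ∀ I, ((NormedSpace.exp (t • A)).map Complex.ofReal).mulVec cc I
        = (((NormedSpace.exp (t • A)).mulVec c I : ℝ) : ℂ) := by
      intro I
      simp only [Matrix.mulVec, dotProduct, Matrix.map_apply, hcc]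
      push_cast
      rfl
    have hcast : ((∑ I, (NormedSpace.exp (t • A)).mulVec c I : ℝ) : ℂ)
        = ∑ I, ((NormedSpace.exp (t • A)).map Complex.ofReal).mulVec cc I := by
      push_cast
      exact Finset.sum_congr rfl fun I _ => (hcastI I).symm
    have hsum2 : ∑ I, (NormedSpace.exp (t • Ac)).mulVec cc I
        = ((Real.exp (t * lam) : ℝ) : ℂ) * S t := by
      rw [hS]
      simp only [hexpc, Matrix.smul_mulVec, Pi.smul_apply, smul_eq_mul]
      rw [← Finset.mul_sum, Complex.ofReal_exp]
    have hfinal : ((∑ I, (NormedSpace.exp (t • A)).mulVec c I : ℝ) : ℂ)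
        = ((Real.exp (t * lam) : ℝ) : ℂ) * S t := by
      rw [hcast]
      simp only [hofReal]
      exact hsum2
    have := congrArg Complex.re hfinal
    rw [Complex.ofReal_re, Complex.mul_re, Complex.ofReal_re, Complex.ofReal_im] at this
    simpa [hg] using this
  have hgpos : ∀ t : ℝ, 0 ≤ t → 0 < g t := by
    intro t ht
    have h1 := hsum t ht
    rw [hkey t] at h1
    nlinarith [Real.exp_pos (t * lam)]
  -- part 2
  set K : ℝ := (p : ℝ) ^ (-(r₀ : ℝ) / 2) with hK
  have hKpos : 0 < K := Real.rpow_pos_of_pos hppos _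
  have part2 : Filter.Tendsto
      (fun t : ℝ => K * Real.exp (t * lam) /
        (q * ∑ I, (NormedSpace.exp (t • A)).mulVec c I))
      Filter.atTop Filter.atTop := by
    have heq : ∀ t : ℝ, K * Real.exp (t * lam) /
        (q * ∑ I, (NormedSpace.exp (t • A)).mulVec c I) = (K / q) * (g t)⁻¹ := by
      intro t
      rw [hkey t]
      rcases eq_or_ne (g t) 0 with h | h
      · simp [h]
      · have he := Real.exp_ne_zero (t * lam)
        field_simp
    have hginv : Filter.Tendsto (fun t => (g t)⁻¹) Filter.atTop Filter.atTop := by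
      apply Filter.Tendsto.inv_tendsto_nhdsGT_zero
      rw [tendsto_nhdsWithin_iff]
      refine ⟨hgtend, ?_⟩
      filter_upwards [Filter.eventually_ge_atTop (0 : ℝ)] with t ht
      exact Set.mem_Ioi.mpr (hgpos t ht)
    have hmul := hginv.const_mul_atTop (div_pos hKpos hq)
    exact hmul.congr fun t => (heq t).symm
  refine ⟨part1, part2, ?_⟩
  -- part 3
  intro C hC0 hcon
  have hrel : ∀ t : ℝ, Real.exp (t * lam) * C /
      (q * ∑ I, (NormedSpace.exp (t • A)).mulVec c I)
      = (C / K) * (K * Real.exp (t * lam) /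
        (q * ∑ I, (NormedSpace.exp (t • A)).mulVec c I)) := by
    intro t
    rw [← mul_div_assoc]
    congr 1
    field_simp
  have habs : Filter.Tendsto
      (fun t : ℝ => |Real.exp (t * lam) * C /
        (q * ∑ I, (NormedSpace.exp (t • A)).mulVec c I)|)
      Filter.atTop Filter.atTop := by
    have h1 := tendsto_abs_atTop_atTop.comp part2
    have h2 := h1.const_mul_atTop (abs_pos.mpr (div_ne_zero hC0 hKpos.ne'))
    refine h2.congr fun t => ?_
    rw [hrel t, abs_mul]
    rfl
  have hev1 : ∀ᶠ t in Filter.atTop, (1 : ℝ) ≤ |Real.exp (t * lam) * C /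
      (q * ∑ I, (NormedSpace.exp (t • A)).mulVec c I)| := habs.eventually_ge_atTop 1
  have hev2 : ∀ᶠ t in Filter.atTop, |Real.exp (t * lam) * C /
      (q * ∑ I, (NormedSpace.exp (t • A)).mulVec c I)| < 1 := by
    have h0 := hcon.abs
    simp only [abs_zero] at h0
    exact h0.eventually_lt_const (by norm_num)
  obtain ⟨t, h1, h2⟩ := (hev1.and hev2).exists
  linarith


end PadicES
end
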